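/- arXiv:1709.02950 — 6 statements merged into one kernel-verified Lean document; each statement's English description precedes it below -/
import Mathlib

section
/- Hardware-quality scaling law, first case (Corollary 1): in the asymptotic setting with scaling exponents z_t > 0 and z_r ≥ 0, for every UE index k the spectral efficiency satisfies R_k(M) → 0 as the number of APs M → ∞. -/
open Finset Filter Topology

noncomputable section

/-- Fixed system parameters of the cell-free massive MIMO uplink:
`K` UEs, pilot length `τ`, pilot power `ρp`, noise power `σ2`,
power-control coefficients `γ`, pilot correlations `δ` (δ k k' = |φ_k^H φ_{k'}|²),
and large-scale fading coefficients `β m k` (AP index `m ∈ ℕ`, UE index `k`). -/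
structure Params where
  K : ℕ
  τ : ℕ
  ρp : ℝ
  σ2 : ℝ
  γ : Fin K → ℝ
  δ : Fin K → Fin K → ℝ
  β : ℕ → Fin K → ℝ

namespace Params

variable (P : Params)

/-- LMMSE coefficient `c_{mk}` for hardware quality factors `κt, κr`. -/
def c (κt κr : ℝ) (m : ℕ) (k : Fin P.K) : ℝ :=
  Real.sqrt ((P.τ : ℝ) * P.ρp * κr * κt) * P.β m k /
    (P.ρp * ∑ k' : Fin P.K, P.β m k' *
      (κr * κt * (P.τ : ℝ) * P.δ k k' + (1 - κr * κt)) + P.σ2)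

/-- Mean-square of the LMMSE channel estimate `λ_{mk}`. -/
def lam (κt κr : ℝ) (m : ℕ) (k : Fin P.K) : ℝ :=
  Real.sqrt ((P.τ : ℝ) * P.ρp * κr * κt) * P.β m k * P.c κt κr m k

/-- Desired-signal term `A_k` (using APs `0, …, M-1`). -/
def A (κt κr : ℝ) (M : ℕ) (k : Fin P.K) : ℝ :=
  P.γ k * (∑ m ∈ Finset.range M, P.lam κt κr m k) ^ 2

/-- Non-coherent interference term `B_k`. -/
def B (κt κr : ℝ) (M : ℕ) (k : Fin P.K) : ℝ :=
  ∑ k' : Fin P.K, P.γ k' *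
    ((∑ m ∈ Finset.range M, P.lam κt κr m k * P.β m k') +
      P.ρp * (1 - κr) * ∑ m ∈ Finset.range M, (P.c κt κr m k) ^ 2 * (P.β m k') ^ 2)

/-- Coherent interference term `C_k`. -/
def C (κt κr : ℝ) (M : ℕ) (k : Fin P.K) : ℝ :=
  ∑ k' : Fin P.K, P.γ k' * (P.δ k k' + (1 - κt) / (κt * (P.τ : ℝ))) *
    (∑ m ∈ Finset.range M, P.lam κt κr m k * (P.β m k' / P.β m k)) ^ 2

/-- AP receiver-distortion term `D_k`. -/
def D (κt κr : ℝ) (M : ℕ) (k : Fin P.K) : ℝ :=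
  ∑ m ∈ Finset.range M, ∑ k' : Fin P.K, P.γ k' *
    (P.lam κt κr m k * P.β m k' +
      (P.c κt κr m k) ^ 2 * (1 - κr) * P.ρp * (P.β m k') ^ 2 +
      (P.c κt κr m k) ^ 2 * κr * P.ρp * P.β m k' *
        ((P.τ : ℝ) * κt * P.δ k k' + (1 - κt)))

/-- Noise term `E_k` for uplink power `ρu`. -/
def E (κt κr ρu : ℝ) (M : ℕ) (k : Fin P.K) : ℝ :=
  (P.σ2 / ρu) * ∑ m ∈ Finset.range M, P.lam κt κr m k

/-- Effective SINR of UE `k` (Theorem 1). -/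
def SINR (κt κr ρu : ℝ) (M : ℕ) (k : Fin P.K) : ℝ :=
  κr * κt * P.A κt κr M k /
    (κr * P.B κt κr M k + κr * P.C κt κr M k - κr * κt * P.A κt κr M k +
      (1 - κr) * P.D κt κr M k + P.E κt κr ρu M k)

/-- Spectral efficiency of UE `k` (Theorem 1): `R_k = log₂(1 + SINR_k)`. -/
def R (κt κr ρu : ℝ) (M : ℕ) (k : Fin P.K) : ℝ :=
  Real.logb 2 (1 + P.SINR κt κr ρu M k)

/-- Standing assumptions on the fixed parameters: `K ≥ 1`, `τ ≥ 1`, `ρp, σ² > 0`,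
`γ_k ∈ (0,1]`, `δ_{kk'} ∈ [0,1]`, `δ_{kk} = 1`. -/
def Valid : Prop :=
  1 ≤ P.K ∧ 1 ≤ P.τ ∧ 0 < P.ρp ∧ 0 < P.σ2 ∧
  (∀ k, 0 < P.γ k ∧ P.γ k ≤ 1) ∧
  (∀ k k', 0 ≤ P.δ k k' ∧ P.δ k k' ≤ 1) ∧
  (∀ k, P.δ k k = 1)

end Params

private lemma sinr_bounds (P : Params) (hP : P.Valid) (ρu : ℝ) (hρu : 0 < ρu)
    (βmin : ℝ) (hβmin : 0 < βmin)
    (hβ : ∀ m : ℕ, ∀ k : Fin P.K, βmin ≤ P.β m k)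
    (κt κr : ℝ) (hκt : 0 < κt) (hκt1 : κt < 1) (hκr : 0 < κr) (hκr1 : κr ≤ 1)
    (M : ℕ) (hM : 1 ≤ M) (k : Fin P.K) :
    0 ≤ P.SINR κt κr ρu M k ∧ P.SINR κt κr ρu M k ≤ κt / (1 - κt) := by
  obtain ⟨hK, hτ, hρp, hσ2, hγ, hδ, hδkk⟩ := hP
  have hβpos : ∀ m (k' : Fin P.K), 0 < P.β m k' := fun m k' => lt_of_lt_of_le hβmin (hβ m k')
  have hτpos : (0:ℝ) < (P.τ : ℝ) := by exact_mod_cast hτ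
  have hκrt1 : κr * κt ≤ 1 := by nlinarith
  have hc : ∀ m (k' : Fin P.K), 0 < P.c κt κr m k' := by
    intro m k'
    unfold Params.c
    apply div_pos
    · refine mul_pos ?_ (hβpos m k')
      apply Real.sqrt_pos.mpr
      positivity
    · have hsum : 0 ≤ ∑ k'' : Fin P.K, P.β m k'' *
          (κr * κt * (P.τ:ℝ) * P.δ k' k'' + (1 - κr * κt)) := by
        apply Finset.sum_nonneg
        intro j _
        apply mul_nonneg (hβpos m j).le
        have h1 := (hδ k' j).1
        have h2 : 0 ≤ κr * κt * (P.τ:ℝ) * P.δ k' j := mul_nonneg (by positivity) h1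
        linarith
      nlinarith
  have hlam : ∀ m (k' : Fin P.K), 0 < P.lam κt κr m k' := by
    intro m k'
    unfold Params.lam
    refine mul_pos (mul_pos ?_ (hβpos m k')) (hc m k')
    apply Real.sqrt_pos.mpr; positivity
  set S := ∑ m ∈ Finset.range M, P.lam κt κr m k with hSdef
  have hS : 0 < S :=
    Finset.sum_pos (fun m _ => hlam m k) (Finset.nonempty_range_iff.mpr (by omega))
  have hA : P.A κt κr M k = P.γ k * S ^ 2 := by unfold Params.A; rw [← hSdef]
  have hB : 0 ≤ P.B κt κr M k := by
    unfold Params.B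
    apply Finset.sum_nonneg; intro j _
    apply mul_nonneg (hγ j).1.le
    apply add_nonneg
    · exact Finset.sum_nonneg fun m _ => mul_nonneg (hlam m k).le (hβpos m j).le
    · apply mul_nonneg (mul_nonneg hρp.le (by linarith))
      exact Finset.sum_nonneg fun m _ => by positivity
  have hx : 0 ≤ (1 - κt) / (κt * (P.τ:ℝ)) := div_nonneg (by linarith) (by positivity)
  have hCterm : P.γ k * (P.δ k k + (1 - κt) / (κt * (P.τ:ℝ))) *
      (∑ m ∈ Finset.range M, P.lam κt κr m k * (P.β m k / P.β m k)) ^ 2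
        ≤ P.C κt κr M k := by
    unfold Params.C
    refine Finset.single_le_sum (f := fun k' => P.γ k' *
      (P.δ k k' + (1 - κt) / (κt * (P.τ:ℝ))) *
      (∑ m ∈ Finset.range M, P.lam κt κr m k * (P.β m k' / P.β m k)) ^ 2)
      (fun j _ => ?_) (Finset.mem_univ k)
    have h1 := (hδ k j).1
    apply mul_nonneg (mul_nonneg (hγ j).1.le (by linarith)) (sq_nonneg _)
  have hinner : (∑ m ∈ Finset.range M, P.lam κt κr m k * (P.β m k / P.β m k)) = S := by
    rw [hSdef]
    exact Finset.sum_congr rfl fun m _ => by rw [div_self (hβpos m k).ne', mul_one]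
  rw [hinner, hδkk k] at hCterm
  have hD : 0 ≤ P.D κt κr M k := by
    unfold Params.D
    apply Finset.sum_nonneg; intro m _
    apply Finset.sum_nonneg; intro j _
    apply mul_nonneg (hγ j).1.le
    have h1 : 0 ≤ P.lam κt κr m k * P.β m j := mul_nonneg (hlam m k).le (hβpos m j).le
    have h2 : 0 ≤ (P.c κt κr m k) ^ 2 * (1 - κr) * P.ρp * (P.β m j) ^ 2 := by
      apply mul_nonneg (mul_nonneg (mul_nonneg (sq_nonneg _) (by linarith)) hρp.le) (sq_nonneg _)
    have h3 : 0 ≤ (P.c κt κr m k) ^ 2 * κr * P.ρp * P.β m j *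
        ((P.τ:ℝ) * κt * P.δ k j + (1 - κt)) := by
      have h4 := (hδ k j).1
      have h5 : 0 ≤ (P.τ:ℝ) * κt * P.δ k j := mul_nonneg (by positivity) h4
      exact mul_nonneg (mul_nonneg (mul_nonneg (mul_nonneg (sq_nonneg _) hκr.le) hρp.le)
        (hβpos m j).le) (by linarith)
    linarith
  have hE : 0 ≤ P.E κt κr ρu M k := by
    unfold Params.E
    rw [← hSdef]
    exact mul_nonneg (div_nonneg hσ2.le hρu.le) hS.le
  have hγk := (hγ k).1
  have hd0pos : 0 < κr * P.γ k * S ^ 2 * (1 - κt) := by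
    apply mul_pos _ (by linarith)
    positivity
  have hden : κr * P.γ k * S ^ 2 * (1 - κt) ≤
      κr * P.B κt κr M k + κr * P.C κt κr M k - κr * κt * P.A κt κr M k +
        (1 - κr) * P.D κt κr M k + P.E κt κr ρu M k := by
    have hCge : κr * (P.γ k * (1 + (1 - κt) / (κt * (P.τ:ℝ))) * S ^ 2)
        ≤ κr * P.C κt κr M k := mul_le_mul_of_nonneg_left hCterm hκr.le
    rw [hA]
    nlinarith [mul_nonneg hκr.le hB, mul_nonneg (by linarith : (0:ℝ) ≤ 1 - κr) hD,
      mul_nonneg (mul_nonneg hκr.le hγk.le) (mul_nonneg (sq_nonneg S) hx)]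
  have hnum : 0 ≤ κr * κt * P.A κt κr M k := by rw [hA]; positivity
  constructor
  · exact div_nonneg hnum (le_trans hd0pos.le hden)
  · unfold Params.SINR
    calc κr * κt * P.A κt κr M k /
        (κr * P.B κt κr M k + κr * P.C κt κr M k - κr * κt * P.A κt κr M k +
          (1 - κr) * P.D κt κr M k + P.E κt κr ρu M k)
        ≤ κr * κt * P.A κt κr M k / (κr * P.γ k * S ^ 2 * (1 - κt)) := by
          apply div_le_div_of_nonneg_left hnum hd0pos hden
      _ = κt / (1 - κt) := by
          rw [hA, div_eq_div_iff hd0pos.ne' (by linarith : (1:ℝ) - κt ≠ 0)]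
          ring

/-- Corollary 1, first case: with hardware-quality scaling exponents `z_t > 0`
and `z_r ≥ 0`, the spectral efficiency of every UE tends to `0` as `M → ∞`. -/
theorem hardware_scaling_law_vanishing_zt_pos
    (P : Params) (hP : P.Valid) (ρu : ℝ) (hρu : 0 < ρu)
    (βmin βmax : ℝ) (hβmin : 0 < βmin)
    (hβ : ∀ m : ℕ, ∀ k : Fin P.K, βmin ≤ P.β m k ∧ P.β m k ≤ βmax)
    (κt0 κr0 : ℝ) (hκt0 : 0 < κt0 ∧ κt0 ≤ 1) (hκr0 : 0 < κr0 ∧ κr0 ≤ 1)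
    (zt zr : ℝ) (hzt : 0 < zt) (hzr : 0 ≤ zr) (k : Fin P.K) :
    Filter.Tendsto
      (fun M : ℕ => P.R (κt0 / (M : ℝ) ^ zt) (κr0 / (M : ℝ) ^ zr) ρu M k)
      Filter.atTop (nhds 0) := by
  have h2 : ∀ᶠ M : ℕ in Filter.atTop,
      0 ≤ P.SINR (κt0 / (M:ℝ) ^ zt) (κr0 / (M:ℝ) ^ zr) ρu M k ∧
      P.SINR (κt0 / (M:ℝ) ^ zt) (κr0 / (M:ℝ) ^ zr) ρu M k ≤
        (κt0 / (M:ℝ) ^ zt) / (1 - κt0 / (M:ℝ) ^ zt) := by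
    filter_upwards [Filter.eventually_ge_atTop 2] with M hM
    have hM1 : (1:ℝ) < (M:ℝ) := by exact_mod_cast lt_of_lt_of_le one_lt_two hM
    have hMpos : (0:ℝ) < (M:ℝ) := by linarith
    have hpt : 1 < (M:ℝ) ^ zt :=
      (Real.one_lt_rpow_iff_of_pos hMpos).mpr (Or.inl ⟨hM1, hzt⟩)
    have hpr : 1 ≤ (M:ℝ) ^ zr := by
      calc (1:ℝ) = 1 ^ zr := (Real.one_rpow zr).symm
        _ ≤ (M:ℝ) ^ zr := Real.rpow_le_rpow zero_le_one hM1.le hzr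
    have hκt : 0 < κt0 / (M:ℝ) ^ zt := div_pos hκt0.1 (by linarith)
    have hκt1 : κt0 / (M:ℝ) ^ zt < 1 :=
      (div_lt_one (by linarith)).mpr (lt_of_le_of_lt hκt0.2 hpt)
    have hκr : 0 < κr0 / (M:ℝ) ^ zr := div_pos hκr0.1 (by linarith)
    have hκr1 : κr0 / (M:ℝ) ^ zr ≤ 1 :=
      (div_le_one (by linarith)).mpr (le_trans hκr0.2 hpr)
    exact sinr_bounds P hP ρu hρu βmin hβmin (fun m k' => (hβ m k').1) _ _
      hκt hκt1 hκr hκr1 M (by omega) k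
  have h1 : Filter.Tendsto (fun M : ℕ => κt0 / (M:ℝ) ^ zt) Filter.atTop (nhds 0) := by
    apply Filter.Tendsto.div_atTop tendsto_const_nhds
    exact (tendsto_rpow_atTop hzt).comp tendsto_natCast_atTop_atTop
  have hbound : Filter.Tendsto
      (fun M : ℕ => (κt0 / (M:ℝ) ^ zt) / (1 - κt0 / (M:ℝ) ^ zt))
      Filter.atTop (nhds 0) := by
    have := h1.div (tendsto_const_nhds.sub h1) (by norm_num : (1:ℝ) - 0 ≠ 0)
    rw [sub_zero, zero_div] at this
    exact this
  have hSINR : Filter.Tendsto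
      (fun M : ℕ => P.SINR (κt0 / (M:ℝ) ^ zt) (κr0 / (M:ℝ) ^ zr) ρu M k)
      Filter.atTop (nhds 0) := by
    refine tendsto_of_tendsto_of_tendsto_of_le_of_le' tendsto_const_nhds hbound
      (h2.mono fun M h => h.1) (h2.mono fun M h => h.2)
  have h1t : Filter.Tendsto
      (fun M : ℕ => 1 + P.SINR (κt0 / (M:ℝ) ^ zt) (κr0 / (M:ℝ) ^ zr) ρu M k)
      Filter.atTop (nhds 1) := by
    simpa using tendsto_const_nhds.add hSINR
  have hlog : ContinuousAt (Real.logb 2) 1 := by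
    unfold Real.logb
    exact (Real.continuousAt_log one_ne_zero).div_const _
  have hcomp := hlog.tendsto.comp h1t
  simpa [Params.R, Real.logb_one, Function.comp_def] using hcomp
end
end

section
/- Hardware-quality scaling law, second case (Corollary 1): in the asymptotic setting with scaling exponents z_t = 0 and z_r > 1/2, for every UE index k the spectral efficiency satisfies R_k(M) → 0 as the number of APs M → ∞. -/
open Finset Filter Topology

noncomputable section

/-- Core estimate: for `M ≥ 1`, `0 < κr ≤ 1`, `0 < κt0 ≤ 1`, the SINR is nonnegative and
bounded by `(κt0² τ ρp βmax² ρu / σ2²) κr² M`. -/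
theorem sinr_bounds_s1 (P : Params) {ρu : ℝ} (hρu : 0 < ρu)
    {βmin βmax : ℝ} (hβmin : 0 < βmin)
    (hβ : ∀ m : ℕ, ∀ k : Fin P.K, βmin ≤ P.β m k ∧ P.β m k ≤ βmax)
    (hτ : 1 ≤ P.τ) (hρp : 0 < P.ρp) (hσ2 : 0 < P.σ2)
    (hγ : ∀ k, 0 < P.γ k ∧ P.γ k ≤ 1)
    (hδ : ∀ k k', 0 ≤ P.δ k k' ∧ P.δ k k' ≤ 1)
    (hδdiag : ∀ k, P.δ k k = 1)
    {κt0 κr : ℝ} (hκt0p : 0 < κt0) (hκt0le : κt0 ≤ 1)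
    (hκrpos : 0 < κr) (hκrle : κr ≤ 1)
    {M : ℕ} (hM : 1 ≤ M) (k : Fin P.K) :
    0 ≤ P.SINR κt0 κr ρu M k ∧
    P.SINR κt0 κr ρu M k ≤
      (κt0 ^ 2 * (P.τ : ℝ) * P.ρp * βmax ^ 2 * ρu / P.σ2 ^ 2) * (κr ^ 2 * M) := by
  have hτR : (0:ℝ) < (P.τ : ℝ) := by exact_mod_cast hτ
  have hβpos : ∀ m : ℕ, ∀ k' : Fin P.K, 0 < P.β m k' := fun m k' =>
    lt_of_lt_of_le hβmin (hβ m k').1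
  have hβmaxpos : 0 < βmax := lt_of_lt_of_le (hβpos 0 k) (hβ 0 k).2
  have hκtκr : 0 < κr * κt0 := mul_pos hκrpos hκt0p
  have hκtκrle : κr * κt0 ≤ 1 := by nlinarith
  set s : ℝ := (P.τ : ℝ) * P.ρp * κr * κt0 with hs_def
  have hs : 0 < s := mul_pos (mul_pos (mul_pos hτR hρp) hκrpos) hκt0p
  set d : ℕ → ℝ := fun m => P.ρp * ∑ k' : Fin P.K, P.β m k' *
      (κr * κt0 * (P.τ : ℝ) * P.δ k k' + (1 - κr * κt0)) + P.σ2 with hd_def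
  have hd : ∀ m, P.σ2 ≤ d m := by
    intro m
    have hsum : 0 ≤ ∑ k' : Fin P.K, P.β m k' *
        (κr * κt0 * (P.τ : ℝ) * P.δ k k' + (1 - κr * κt0)) := by
      apply Finset.sum_nonneg
      intro k' _
      have h1 := (hδ k k').1
      have h2 := hβpos m k'
      have h3 : 0 ≤ κr * κt0 * (P.τ:ℝ) * P.δ k k' :=
        mul_nonneg (mul_nonneg hκtκr.le hτR.le) h1
      exact mul_nonneg h2.le (by linarith)
    have h5 := mul_nonneg hρp.le hsum
    simp only [hd_def]
    linarith
  have hdpos : ∀ m, 0 < d m := fun m => lt_of_lt_of_le hσ2 (hd m)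
  -- c facts
  have hc_eq : ∀ m, P.c κt0 κr m k = Real.sqrt s * P.β m k / d m := by
    intro m; rfl
  have hc_nonneg : ∀ m, 0 ≤ P.c κt0 κr m k := by
    intro m
    rw [hc_eq]
    exact div_nonneg (mul_nonneg (Real.sqrt_nonneg _) (hβpos m k).le) (hdpos m).le
  -- lam facts
  have hlam_eq : ∀ m, P.lam κt0 κr m k = s * (P.β m k) ^ 2 / d m := by
    intro m
    show Real.sqrt s * P.β m k * P.c κt0 κr m k = _
    rw [hc_eq]
    have h1 : Real.sqrt s * Real.sqrt s = s := Real.mul_self_sqrt hs.le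
    calc Real.sqrt s * P.β m k * (Real.sqrt s * P.β m k / d m)
        = Real.sqrt s * Real.sqrt s * (P.β m k) ^ 2 / d m := by ring
      _ = s * (P.β m k) ^ 2 / d m := by rw [h1]
  have hlam_pos : ∀ m, 0 < P.lam κt0 κr m k := by
    intro m
    rw [hlam_eq]
    exact div_pos (mul_pos hs (pow_pos (hβpos m k) 2)) (hdpos m)
  have hlam_le : ∀ m, P.lam κt0 κr m k ≤ s * βmax ^ 2 / P.σ2 := by
    intro m
    rw [hlam_eq]
    apply div_le_div₀ (mul_pos hs (pow_pos hβmaxpos 2)).le ?_ hσ2 (hd m)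
    have h1 := (hβ m k).2
    have h2 := (hβpos m k).le
    have h3 : (P.β m k) ^ 2 ≤ βmax ^ 2 := by nlinarith
    exact mul_le_mul_of_nonneg_left h3 hs.le
  -- sum of lam
  set S : ℝ := ∑ m ∈ Finset.range M, P.lam κt0 κr m k with hS_def
  have hSpos : 0 < S := by
    apply Finset.sum_pos (fun m _ => hlam_pos m)
    exact Finset.nonempty_range_iff.mpr (by omega)
  have hSle : S ≤ M * (s * βmax ^ 2 / P.σ2) := by
    calc S ≤ ∑ _m ∈ Finset.range M, (s * βmax ^ 2 / P.σ2) :=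
          Finset.sum_le_sum (fun m _ => hlam_le m)
      _ = M * (s * βmax ^ 2 / P.σ2) := by
          rw [Finset.sum_const, Finset.card_range, nsmul_eq_mul]
  -- A
  have hA_eq : P.A κt0 κr M k = P.γ k * S ^ 2 := rfl
  have hA_nonneg : 0 ≤ P.A κt0 κr M k := by
    rw [hA_eq]; exact mul_nonneg (hγ k).1.le (sq_nonneg S)
  -- B nonneg
  have hB_nonneg : 0 ≤ P.B κt0 κr M k := by
    apply Finset.sum_nonneg
    intro k' _
    apply mul_nonneg (hγ k').1.le
    apply add_nonneg
    · apply Finset.sum_nonneg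
      intro m _
      exact mul_nonneg (hlam_pos m).le (hβpos m k').le
    · apply mul_nonneg (mul_nonneg hρp.le (by linarith))
      apply Finset.sum_nonneg
      intro m _
      exact mul_nonneg (sq_nonneg _) (sq_nonneg _)
  -- C ≥ A
  have he : 0 ≤ (1 - κt0) / (κt0 * (P.τ : ℝ)) :=
    div_nonneg (by linarith) (mul_pos hκt0p hτR).le
  have hC_ge : P.A κt0 κr M k ≤ P.C κt0 κr M k := by
    have hterm : P.A κt0 κr M k ≤ P.γ k * (P.δ k k + (1 - κt0) / (κt0 * (P.τ : ℝ))) *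
        (∑ m ∈ Finset.range M, P.lam κt0 κr m k * (P.β m k / P.β m k)) ^ 2 := by
      have hinner : ∑ m ∈ Finset.range M, P.lam κt0 κr m k * (P.β m k / P.β m k) = S := by
        apply Finset.sum_congr rfl
        intro m _
        rw [div_self (hβpos m k).ne']
        ring
      rw [hinner, hδdiag k, hA_eq]
      have hp : 0 ≤ P.γ k * (1 - κt0) / (κt0 * (P.τ : ℝ)) * S ^ 2 :=
        mul_nonneg (mul_nonneg (mul_nonneg (hγ k).1.le (by linarith))
          (by positivity)) (sq_nonneg S)
      nlinarith [hp]
    calc P.A κt0 κr M k ≤ _ := hterm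
      _ ≤ P.C κt0 κr M k := by
        apply Finset.single_le_sum (f := fun k' => P.γ k' *
          (P.δ k k' + (1 - κt0) / (κt0 * (P.τ : ℝ))) *
          (∑ m ∈ Finset.range M, P.lam κt0 κr m k * (P.β m k' / P.β m k)) ^ 2)
          ?_ (Finset.mem_univ k)
        intro k' _
        have h1 := (hδ k k').1
        exact mul_nonneg (mul_nonneg (hγ k').1.le (by linarith)) (sq_nonneg _)
  -- D nonneg
  have hD_nonneg : 0 ≤ P.D κt0 κr M k := by
    apply Finset.sum_nonneg
    intro m _
    apply Finset.sum_nonneg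
    intro k' _
    apply mul_nonneg (hγ k').1.le
    have h1 := (hδ k k').1
    have h2 := (hβpos m k').le
    have h5 : (0:ℝ) ≤ (P.τ : ℝ) * κt0 * P.δ k k' + (1 - κt0) :=
      add_nonneg (mul_nonneg (mul_nonneg hτR.le hκt0p.le) h1) (by linarith)
    have h7 : 0 ≤ P.lam κt0 κr m k * P.β m k' := mul_nonneg (hlam_pos m).le h2
    have h8 : 0 ≤ (P.c κt0 κr m k) ^ 2 * (1 - κr) * P.ρp * (P.β m k') ^ 2 :=
      mul_nonneg (mul_nonneg (mul_nonneg (sq_nonneg _) (by linarith)) hρp.le) (sq_nonneg _)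
    have h9 : 0 ≤ (P.c κt0 κr m k) ^ 2 * κr * P.ρp * P.β m k' *
        ((P.τ : ℝ) * κt0 * P.δ k k' + (1 - κt0)) :=
      mul_nonneg (mul_nonneg (mul_nonneg (mul_nonneg (sq_nonneg _) hκrpos.le) hρp.le) h2) h5
    linarith
  -- E
  have hE_eq : P.E κt0 κr ρu M k = (P.σ2 / ρu) * S := rfl
  have hE_pos : 0 < P.E κt0 κr ρu M k := by
    rw [hE_eq]; exact mul_pos (div_pos hσ2 hρu) hSpos
  -- denominator
  set den : ℝ := κr * P.B κt0 κr M k + κr * P.C κt0 κr M k - κr * κt0 * P.A κt0 κr M k +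
      (1 - κr) * P.D κt0 κr M k + P.E κt0 κr ρu M k with hden_def
  have hCA : 0 ≤ κr * P.C κt0 κr M k - κr * κt0 * P.A κt0 κr M k := by
    have h1 : κt0 * P.A κt0 κr M k ≤ P.A κt0 κr M k := by nlinarith [hA_nonneg]
    have h2 : κt0 * P.A κt0 κr M k ≤ P.C κt0 κr M k := h1.trans hC_ge
    have h3 := mul_le_mul_of_nonneg_left h2 hκrpos.le
    linarith
  have hden_ge : P.E κt0 κr ρu M k ≤ den := by
    rw [hden_def]
    have h1 : 0 ≤ κr * P.B κt0 κr M k := mul_nonneg hκrpos.le hB_nonneg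
    have h2 : 0 ≤ (1 - κr) * P.D κt0 κr M k := mul_nonneg (by linarith) hD_nonneg
    linarith
  have hden_pos : 0 < den := lt_of_lt_of_le hE_pos hden_ge
  have hSINR_eq : P.SINR κt0 κr ρu M k = κr * κt0 * P.A κt0 κr M k / den := rfl
  have hN_nonneg : 0 ≤ κr * κt0 * P.A κt0 κr M k := mul_nonneg hκtκr.le hA_nonneg
  clear_value s d S den
  constructor
  · rw [hSINR_eq]
    exact div_nonneg hN_nonneg hden_pos.le
  · rw [hSINR_eq]
    have h1 : κr * κt0 * P.A κt0 κr M k / den ≤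
        κr * κt0 * P.A κt0 κr M k / P.E κt0 κr ρu M k :=
      div_le_div_of_nonneg_left hN_nonneg hE_pos hden_ge
    apply h1.trans
    rw [div_le_iff₀ hE_pos]
    rw [hA_eq, hE_eq]
    have hγk1 := (hγ k).1
    have hγk2 := (hγ k).2
    have key : κr * κt0 * (P.γ k * S ^ 2) ≤
        κr * κt0 * (M * (s * βmax ^ 2 / P.σ2)) * S := by
      have h2 : P.γ k * S ≤ M * (s * βmax ^ 2 / P.σ2) := by
        have h2a : P.γ k * S ≤ 1 * S := mul_le_mul_of_nonneg_right hγk2 hSpos.le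
        calc P.γ k * S ≤ 1 * S := h2a
          _ = S := one_mul S
          _ ≤ _ := hSle
      have h3 : 0 ≤ κr * κt0 * S := mul_nonneg hκtκr.le hSpos.le
      have h4 := mul_le_mul_of_nonneg_left h2 h3
      linarith [h4]
    apply key.trans
    have hσ2ne := hσ2.ne'
    have hρune := hρu.ne'
    have heq : κr * κt0 * (M * (s * βmax ^ 2 / P.σ2)) * S =
        κt0 ^ 2 * (P.τ : ℝ) * P.ρp * βmax ^ 2 * ρu / P.σ2 ^ 2 *
          (κr ^ 2 * M) * (P.σ2 / ρu * S) := by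
      rw [hs_def]
      field_simp
    rw [heq]


/-- Corollary 1, second case: with scaling exponents `z_t = 0` and `z_r > 1/2`
(i.e. `κ_t(M) = κ_{t0}` constant and `κ_r(M) = κ_{r0}/M^{z_r}`), the spectral
efficiency of every UE tends to `0` as `M → ∞`. -/
theorem hardware_scaling_law_vanishing_zr_large
    (P : Params) (hP : P.Valid) (ρu : ℝ) (hρu : 0 < ρu)
    (βmin βmax : ℝ) (hβmin : 0 < βmin)
    (hβ : ∀ m : ℕ, ∀ k : Fin P.K, βmin ≤ P.β m k ∧ P.β m k ≤ βmax)
    (κt0 κr0 : ℝ) (hκt0 : 0 < κt0 ∧ κt0 ≤ 1) (hκr0 : 0 < κr0 ∧ κr0 ≤ 1)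
    (zr : ℝ) (hzr : 1 / 2 < zr) (k : Fin P.K) :
    Filter.Tendsto
      (fun M : ℕ => P.R κt0 (κr0 / (M : ℝ) ^ zr) ρu M k)
      Filter.atTop (nhds 0) := by
  obtain ⟨hK, hτ, hρp, hσ2, hγ, hδ, hδdiag⟩ := hP
  obtain ⟨hκt0p, hκt0le⟩ := hκt0
  obtain ⟨hκr0p, hκr0le⟩ := hκr0
  have hτR : (0:ℝ) < (P.τ : ℝ) := by exact_mod_cast hτ
  have hβmaxpos : 0 < βmax := lt_of_lt_of_le hβmin (le_trans (hβ 0 k).1 (hβ 0 k).2)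
  set C0 : ℝ := κt0 ^ 2 * (P.τ : ℝ) * P.ρp * βmax ^ 2 * ρu / P.σ2 ^ 2 with hC0
  have hg : Filter.Tendsto (fun M : ℕ => C0 * ((κr0 / (M : ℝ) ^ zr) ^ 2 * M))
      Filter.atTop (nhds 0) := by
    have h1 : Filter.Tendsto (fun M : ℕ => (M : ℝ) ^ (1 - 2 * zr))
        Filter.atTop (nhds 0) := by
      have h2 : (0:ℝ) < 2 * zr - 1 := by linarith
      have h := (tendsto_rpow_neg_atTop h2).comp
        (tendsto_natCast_atTop_atTop (R := ℝ))
      have hfe : (fun M : ℕ => (M : ℝ) ^ (1 - 2 * zr)) =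
          ((fun x : ℝ => x ^ (-(2 * zr - 1))) ∘ (Nat.cast : ℕ → ℝ)) := by
        funext M
        simp only [Function.comp]
        congr 1
        ring
      rw [hfe]
      exact h
    have h3 : Filter.Tendsto (fun M : ℕ => C0 * κr0 ^ 2 * (M : ℝ) ^ (1 - 2 * zr))
        Filter.atTop (nhds 0) := by
      have := h1.const_mul (C0 * κr0 ^ 2)
      simpa using this
    apply h3.congr'
    filter_upwards [Filter.eventually_ge_atTop 1] with M hM
    have hMpos : (0:ℝ) < (M : ℝ) := by exact_mod_cast hM
    have hMzr : (0:ℝ) < (M : ℝ) ^ zr := Real.rpow_pos_of_pos hMpos zr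
    have hsq : ((M : ℝ) ^ zr) ^ 2 = (M : ℝ) ^ (2 * zr) := by
      rw [← Real.rpow_natCast ((M:ℝ) ^ zr) 2, ← Real.rpow_mul hMpos.le]
      norm_num
      ring_nf
    have hsub : (M : ℝ) ^ (1 - 2 * zr) = (M : ℝ) / (M : ℝ) ^ (2 * zr) := by
      rw [Real.rpow_sub hMpos, Real.rpow_one]
    rw [hsub, ← hsq]
    field_simp
  have hmain : Filter.Tendsto (fun M : ℕ => P.SINR κt0 (κr0 / (M : ℝ) ^ zr) ρu M k)
      Filter.atTop (nhds 0) := by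
    apply squeeze_zero' ?lower ?upper hg
    case lower =>
      filter_upwards [Filter.eventually_ge_atTop 1] with M hM
      have hMzr1 : (1:ℝ) ≤ (M : ℝ) ^ zr :=
        Real.one_le_rpow (by exact_mod_cast hM) (by linarith)
      have hMzrpos : (0:ℝ) < (M : ℝ) ^ zr := lt_of_lt_of_le one_pos hMzr1
      have hκrpos : 0 < κr0 / (M : ℝ) ^ zr := div_pos hκr0p hMzrpos
      have hκrle : κr0 / (M : ℝ) ^ zr ≤ 1 := by
        rw [div_le_one hMzrpos]; linarith
      exact (sinr_bounds_s1 P hρu hβmin hβ hτ hρp hσ2 hγ hδ hδdiag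
        hκt0p hκt0le hκrpos hκrle hM k).1
    case upper =>
      filter_upwards [Filter.eventually_ge_atTop 1] with M hM
      have hMzr1 : (1:ℝ) ≤ (M : ℝ) ^ zr :=
        Real.one_le_rpow (by exact_mod_cast hM) (by linarith)
      have hMzrpos : (0:ℝ) < (M : ℝ) ^ zr := lt_of_lt_of_le one_pos hMzr1
      have hκrpos : 0 < κr0 / (M : ℝ) ^ zr := div_pos hκr0p hMzrpos
      have hκrle : κr0 / (M : ℝ) ^ zr ≤ 1 := by
        rw [div_le_one hMzrpos]; linarith
      have h := (sinr_bounds_s1 P hρu hβmin hβ hτ hρp hσ2 hγ hδ hδdiag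
        hκt0p hκt0le hκrpos hκrle hM k).2
      calc P.SINR κt0 (κr0 / (M : ℝ) ^ zr) ρu M k
          ≤ (κt0 ^ 2 * (P.τ : ℝ) * P.ρp * βmax ^ 2 * ρu / P.σ2 ^ 2) *
            ((κr0 / (M : ℝ) ^ zr) ^ 2 * M) := h
        _ = C0 * ((κr0 / (M : ℝ) ^ zr) ^ 2 * M) := by rw [hC0]
  have hcont : ContinuousAt (fun x : ℝ => Real.logb 2 (1 + x)) 0 := by
    have h1 : ContinuousAt (fun x : ℝ => 1 + x) 0 := by fun_prop
    have h2 : ContinuousAt Real.log ((fun x : ℝ => 1 + x) 0) :=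
      Real.continuousAt_log (by norm_num)
    have := (h2.comp h1).div_const (Real.log 2)
    simpa [Real.logb] using this
  have hfin := hcont.tendsto.comp hmain
  simp only [Function.comp, add_zero, Real.logb_one] at hfin
  exact hfin
end
end

section
/- Non-vanishing limit in the convergent case of the scaling law (Corollary 1): in the asymptotic setting with z_t = 0, 0 < z_r < 1/2, and κ_{t0} < 1, for every UE index k the spectral efficiency does not vanish: liminf_{M → ∞} R_k(M) > 0. In other words, although the receiver hardware quality of the APs is degraded as κ_r(M) = κ_{r0}/M^{z_r} → 0, the spectral efficiency converges to a non-zero value. -/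
open Finset Filter Topology

noncomputable section

/-! ### Auxiliary definitions and lemmas for the proof -/

lemma sqrt_mul_self_helper (s b D : ℝ) (hs : 0 ≤ s) :
    Real.sqrt s * b * (Real.sqrt s * b / D) = s * b ^ 2 / D := by
  have h : Real.sqrt s * Real.sqrt s = s := Real.mul_self_sqrt hs
  calc Real.sqrt s * b * (Real.sqrt s * b / D)
      = Real.sqrt s * Real.sqrt s * b ^ 2 / D := by ring
    _ = s * b ^ 2 / D := by rw [h]

lemma sqrt_sq_helper (s b D : ℝ) (hs : 0 ≤ s) :
    (Real.sqrt s * b / D) ^ 2 = s * b ^ 2 / D ^ 2 := by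
  rw [div_pow, mul_pow, Real.sq_sqrt hs]

/-- Upper bound for the estimation denominators. -/
def auxDMax (P : Params) (βmax : ℝ) : ℝ :=
  P.ρp * ((P.K : ℝ) * (βmax * ((P.τ : ℝ) + 1))) + P.σ2

/-- Lower bound for `λ_{mk}/κ`. -/
def auxLMin (P : Params) (βmin βmax : ℝ) : ℝ :=
  (P.τ : ℝ) * P.ρp * βmin ^ 2 / auxDMax P βmax

/-- Upper bound for `λ_{mk}/κ`. -/
def auxLMax (P : Params) (βmax : ℝ) : ℝ :=
  (P.τ : ℝ) * P.ρp * βmax ^ 2 / P.σ2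

/-- Upper bound for `c_{mk}²/κ`. -/
def auxC0 (P : Params) (βmax : ℝ) : ℝ :=
  (P.τ : ℝ) * P.ρp * βmax ^ 2 / P.σ2 ^ 2

/-- Constant in the bound `κr C_k ≤ auxCC · κ³M²`. -/
def auxCC (P : Params) (βmin βmax κt : ℝ) : ℝ :=
  (P.K : ℝ) * ((1 + 1 / (κt * (P.τ : ℝ))) *
    (auxLMax P βmax * βmax / βmin) ^ 2) / κt

/-- Constant in the bound `κr B_k ≤ auxCB · κ²M`. -/
def auxCB (P : Params) (βmax κt : ℝ) : ℝ :=
  (P.K : ℝ) * (auxLMax P βmax * βmax + P.ρp * (auxC0 P βmax * βmax ^ 2)) / κt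

/-- Constant in the bound `D_k + E_k ≤ auxCD · κM`. -/
def auxCD (P : Params) (βmax ρu : ℝ) : ℝ :=
  (P.K : ℝ) * (auxLMax P βmax * βmax + auxC0 P βmax * P.ρp * βmax ^ 2 +
    auxC0 P βmax * P.ρp * (βmax * ((P.τ : ℝ) + 1))) + P.σ2 / ρu * auxLMax P βmax

set_option maxHeartbeats 1000000 in
lemma aux_sinr_ge (P : Params) (hP : P.Valid) (ρu : ℝ) (hρu : 0 < ρu)
    (βmin βmax : ℝ) (hβmin : 0 < βmin)
    (hβ : ∀ m : ℕ, ∀ k : Fin P.K, βmin ≤ P.β m k ∧ P.β m k ≤ βmax)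
    (κt κr : ℝ) (hκt : 0 < κt) (hκt1 : κt < 1) (hκr : 0 < κr) (hκr1 : κr ≤ 1)
    (k : Fin P.K) (M : ℕ) (hM : 1 ≤ M)
    (h2 : auxCB P βmax κt ≤ κr * κt * M)
    (h3 : auxCD P βmax ρu ≤ (κr * κt) ^ 2 * M) :
    P.γ k * auxLMin P βmin βmax ^ 2 / (auxCC P βmin βmax κt + 2)
      ≤ P.SINR κt κr ρu M k ∧
    P.SINR κt κr ρu M k ≤
      κt * auxLMax P βmax ^ 2 / ((1 - κt) * auxLMin P βmin βmax ^ 2) := by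
  obtain ⟨hK, hτ, hρp, hσ2, hγ, hδ, hδdiag⟩ := hP
  have hτ1 : (1 : ℝ) ≤ (P.τ : ℝ) := by exact_mod_cast hτ
  have hτpos : (0 : ℝ) < (P.τ : ℝ) := by linarith
  have hK1 : (1 : ℝ) ≤ (P.K : ℝ) := by exact_mod_cast hK
  have hβmax : 0 < βmax := lt_of_lt_of_le hβmin ((hβ 0 k).1.trans (hβ 0 k).2)
  have hκ : 0 < κr * κt := mul_pos hκr hκt
  have hγk : 0 < P.γ k := (hγ k).1
  have hM1 : (1 : ℝ) ≤ (M : ℝ) := by exact_mod_cast hM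
  have hMpos : (0 : ℝ) < (M : ℝ) := by linarith
  have hs : 0 ≤ (P.τ : ℝ) * P.ρp * κr * κt := by positivity
  have hdM : 0 < auxDMax P βmax := by unfold auxDMax; positivity
  have hlmin : 0 < auxLMin P βmin βmax := by
    unfold auxLMin
    exact div_pos (by positivity) hdM
  have hlmax : 0 ≤ auxLMax P βmax := by unfold auxLMax; positivity
  have hc0 : 0 ≤ auxC0 P βmax := by unfold auxC0; positivity
  have hcC : 0 ≤ auxCC P βmin βmax κt := by unfold auxCC auxLMax; positivity
  -- pointwise bounds on lam and c²
  have key : ∀ m : ℕ,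
      (κr * κt) * auxLMin P βmin βmax ≤ P.lam κt κr m k ∧
      P.lam κt κr m k ≤ (κr * κt) * auxLMax P βmax ∧
      (P.c κt κr m k) ^ 2 ≤ (κr * κt) * auxC0 P βmax := by
    intro m
    set D := P.ρp * ∑ k' : Fin P.K, P.β m k' *
        (κr * κt * (P.τ : ℝ) * P.δ k k' + (1 - κr * κt)) + P.σ2 with hD
    have hb1 := (hβ m k).1
    have hb2 := (hβ m k).2
    have hβpos : 0 < P.β m k := lt_of_lt_of_le hβmin hb1
    have hsum_nn : 0 ≤ ∑ k' : Fin P.K, P.β m k' *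
        (κr * κt * (P.τ : ℝ) * P.δ k k' + (1 - κr * κt)) := by
      apply Finset.sum_nonneg
      intro k' _
      have hb := (hβ m k').1
      have hd1 := (hδ k k').1
      have h1 : 0 ≤ κr * κt * (P.τ : ℝ) * P.δ k k' := mul_nonneg (by positivity) hd1
      have h2' : κr * κt ≤ 1 := by nlinarith
      have hX : 0 ≤ κr * κt * (P.τ : ℝ) * P.δ k k' + (1 - κr * κt) := by linarith
      exact mul_nonneg (le_trans hβmin.le hb) hX
    have hDlb : P.σ2 ≤ D := by
      rw [hD]
      have := mul_nonneg hρp.le hsum_nn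
      linarith
    have hDpos : 0 < D := lt_of_lt_of_le hσ2 hDlb
    have hDub : D ≤ auxDMax P βmax := by
      rw [hD]
      unfold auxDMax
      have hsum_ub : ∑ k' : Fin P.K, P.β m k' *
          (κr * κt * (P.τ : ℝ) * P.δ k k' + (1 - κr * κt)) ≤
          (P.K : ℝ) * (βmax * ((P.τ : ℝ) + 1)) := by
        have := Finset.sum_le_card_nsmul Finset.univ
          (fun k' => P.β m k' * (κr * κt * (P.τ : ℝ) * P.δ k k' + (1 - κr * κt)))
          (βmax * ((P.τ : ℝ) + 1)) ?_
        · simpa [Finset.card_univ, nsmul_eq_mul] using this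
        · intro k' _
          have hb := (hβ m k').1
          have hb' := (hβ m k').2
          have hd1 := (hδ k k').1
          have hd2 := (hδ k k').2
          have hβk'pos : 0 < P.β m k' := lt_of_lt_of_le hβmin hb
          have hκκ1 : κr * κt ≤ 1 := by nlinarith
          have hprod : κr * κt * P.δ k k' ≤ 1 :=
            le_trans (mul_le_of_le_one_left hd1 hκκ1) hd2
          have hfac : κr * κt * (P.τ : ℝ) * P.δ k k' + (1 - κr * κt) ≤ (P.τ : ℝ) + 1 := by
            have h5 := mul_le_mul_of_nonneg_left hprod hτpos.le
            nlinarith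
          have hfac0 : 0 ≤ κr * κt * (P.τ : ℝ) * P.δ k k' + (1 - κr * κt) := by
            have h1 : 0 ≤ κr * κt * (P.τ : ℝ) * P.δ k k' := mul_nonneg (by positivity) hd1
            have h2' : κr * κt ≤ 1 := by nlinarith
            linarith
          exact mul_le_mul hb' hfac hfac0 (by positivity)
      have := mul_le_mul_of_nonneg_left hsum_ub hρp.le
      linarith
    have hc_eq : P.c κt κr m k =
        Real.sqrt ((P.τ : ℝ) * P.ρp * κr * κt) * P.β m k / D := by
      simp only [Params.c]
      rw [hD]
    have hlam_eq : P.lam κt κr m k =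
        (P.τ : ℝ) * P.ρp * κr * κt * (P.β m k) ^ 2 / D := by
      simp only [Params.lam, hc_eq]
      exact sqrt_mul_self_helper _ _ _ hs
    have hcsq_eq : (P.c κt κr m k) ^ 2 =
        (P.τ : ℝ) * P.ρp * κr * κt * (P.β m k) ^ 2 / D ^ 2 := by
      rw [hc_eq]
      exact sqrt_sq_helper _ _ _ hs
    have hβsq_lb : βmin ^ 2 ≤ (P.β m k) ^ 2 := pow_le_pow_left₀ hβmin.le hb1 2
    have hβsq_ub : (P.β m k) ^ 2 ≤ βmax ^ 2 := pow_le_pow_left₀ hβpos.le hb2 2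
    refine ⟨?_, ?_, ?_⟩
    · rw [hlam_eq]
      have h1 : (P.τ : ℝ) * P.ρp * κr * κt * βmin ^ 2 / auxDMax P βmax ≤
          (P.τ : ℝ) * P.ρp * κr * κt * (P.β m k) ^ 2 / D :=
        div_le_div₀ (by positivity)
          (mul_le_mul_of_nonneg_left hβsq_lb hs) hDpos hDub
      refine le_trans (le_of_eq ?_) h1
      unfold auxLMin; ring
    · rw [hlam_eq]
      have h1 : (P.τ : ℝ) * P.ρp * κr * κt * (P.β m k) ^ 2 / D ≤
          (P.τ : ℝ) * P.ρp * κr * κt * βmax ^ 2 / P.σ2 :=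
        div_le_div₀ (by positivity)
          (mul_le_mul_of_nonneg_left hβsq_ub hs) hσ2 hDlb
      refine le_trans h1 (le_of_eq ?_)
      unfold auxLMax; ring
    · rw [hcsq_eq]
      have h1 : (P.τ : ℝ) * P.ρp * κr * κt * (P.β m k) ^ 2 / D ^ 2 ≤
          (P.τ : ℝ) * P.ρp * κr * κt * βmax ^ 2 / P.σ2 ^ 2 :=
        div_le_div₀ (by positivity)
          (mul_le_mul_of_nonneg_left hβsq_ub hs) (by positivity)
          (pow_le_pow_left₀ hσ2.le hDlb 2)
      refine le_trans h1 (le_of_eq ?_)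
      unfold auxC0; ring
  have hlam_nn : ∀ m : ℕ, 0 ≤ P.lam κt κr m k := fun m =>
    le_trans (by positivity) (key m).1
  have hcsq_nn : ∀ m : ℕ, 0 ≤ (P.c κt κr m k) ^ 2 := fun m => sq_nonneg _
  -- bounds on the sum S
  have hSlb : (M : ℝ) * ((κr * κt) * auxLMin P βmin βmax) ≤
      ∑ m ∈ Finset.range M, P.lam κt κr m k := by
    have := Finset.card_nsmul_le_sum (Finset.range M)
      (fun m => P.lam κt κr m k) ((κr * κt) * auxLMin P βmin βmax)
      (fun m _ => (key m).1)
    simpa [Finset.card_range, nsmul_eq_mul] using this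
  have hSub : ∑ m ∈ Finset.range M, P.lam κt κr m k ≤
      (M : ℝ) * ((κr * κt) * auxLMax P βmax) := by
    have := Finset.sum_le_card_nsmul (Finset.range M)
      (fun m => P.lam κt κr m k) ((κr * κt) * auxLMax P βmax)
      (fun m _ => (key m).2.1)
    simpa [Finset.card_range, nsmul_eq_mul] using this
  have hSpos : 0 < ∑ m ∈ Finset.range M, P.lam κt κr m k :=
    lt_of_lt_of_le (by positivity) hSlb
  -- numerator lower bound
  have hA_lb : P.γ k * auxLMin P βmin βmax ^ 2 * ((κr * κt) ^ 3 * (M : ℝ) ^ 2) ≤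
      κr * κt * P.A κt κr M k := by
    have h1 : ((M : ℝ) * ((κr * κt) * auxLMin P βmin βmax)) ^ 2 ≤
        (∑ m ∈ Finset.range M, P.lam κt κr m k) ^ 2 :=
      pow_le_pow_left₀ (by positivity) hSlb 2
    calc P.γ k * auxLMin P βmin βmax ^ 2 * ((κr * κt) ^ 3 * (M : ℝ) ^ 2)
        = (κr * κt * P.γ k) * ((M : ℝ) * ((κr * κt) * auxLMin P βmin βmax)) ^ 2 := by
          ring
      _ ≤ (κr * κt * P.γ k) * (∑ m ∈ Finset.range M, P.lam κt κr m k) ^ 2 :=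
          mul_le_mul_of_nonneg_left h1 (by positivity)
      _ = κr * κt * P.A κt κr M k := by simp only [Params.A]; ring
  have hA_eq : P.A κt κr M k = P.γ k * (∑ m ∈ Finset.range M, P.lam κt κr m k) ^ 2 := rfl
  -- per-term bounds reused below
  have hlamβ : ∀ (m : ℕ) (k' : Fin P.K), P.lam κt κr m k * P.β m k' ≤
      (κr * κt) * (auxLMax P βmax * βmax) := by
    intro m k'
    have hb' := (hβ m k').2
    have hbnn : 0 ≤ P.β m k' := le_trans hβmin.le (hβ m k').1
    calc P.lam κt κr m k * P.β m k' ≤ ((κr * κt) * auxLMax P βmax) * βmax :=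
          mul_le_mul (key m).2.1 hb' hbnn (by positivity)
      _ = (κr * κt) * (auxLMax P βmax * βmax) := by ring
  -- bound on B
  have hT1 : ∀ k' : Fin P.K, ∑ m ∈ Finset.range M, P.lam κt κr m k * P.β m k' ≤
      (M : ℝ) * ((κr * κt) * (auxLMax P βmax * βmax)) := by
    intro k'
    have := Finset.sum_le_card_nsmul (Finset.range M)
      (fun m => P.lam κt κr m k * P.β m k') _ (fun m _ => hlamβ m k')
    simpa [Finset.card_range, nsmul_eq_mul] using this
  have hT2 : ∀ k' : Fin P.K, ∑ m ∈ Finset.range M, (P.c κt κr m k) ^ 2 * (P.β m k') ^ 2 ≤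
      (M : ℝ) * ((κr * κt) * (auxC0 P βmax * βmax ^ 2)) := by
    intro k'
    have hper : ∀ m ∈ Finset.range M, (P.c κt κr m k) ^ 2 * (P.β m k') ^ 2 ≤
        (κr * κt) * (auxC0 P βmax * βmax ^ 2) := by
      intro m _
      have hb2' : (P.β m k') ^ 2 ≤ βmax ^ 2 :=
        pow_le_pow_left₀ (le_trans hβmin.le (hβ m k').1) (hβ m k').2 2
      calc (P.c κt κr m k) ^ 2 * (P.β m k') ^ 2 ≤ ((κr * κt) * auxC0 P βmax) * βmax ^ 2 :=
            mul_le_mul (key m).2.2 hb2' (sq_nonneg _) (by positivity)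
        _ = (κr * κt) * (auxC0 P βmax * βmax ^ 2) := by ring
    have := Finset.sum_le_card_nsmul (Finset.range M) _ _ hper
    simpa [Finset.card_range, nsmul_eq_mul] using this
  have hT1nn : ∀ k' : Fin P.K, 0 ≤ ∑ m ∈ Finset.range M, P.lam κt κr m k * P.β m k' :=
    fun k' => Finset.sum_nonneg fun m _ =>
      mul_nonneg (hlam_nn m) (le_trans hβmin.le (hβ m k').1)
  have hT2nn : ∀ k' : Fin P.K, 0 ≤ ∑ m ∈ Finset.range M, (P.c κt κr m k) ^ 2 * (P.β m k') ^ 2 :=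
    fun k' => Finset.sum_nonneg fun m _ => mul_nonneg (sq_nonneg _) (sq_nonneg _)
  have hB_ub : P.B κt κr M k ≤ (P.K : ℝ) * ((M : ℝ) * ((κr * κt) *
      (auxLMax P βmax * βmax + P.ρp * (auxC0 P βmax * βmax ^ 2)))) := by
    unfold Params.B
    have hterm : ∀ k' ∈ Finset.univ, P.γ k' *
        ((∑ m ∈ Finset.range M, P.lam κt κr m k * P.β m k') +
          P.ρp * (1 - κr) * ∑ m ∈ Finset.range M, (P.c κt κr m k) ^ 2 * (P.β m k') ^ 2) ≤
        (M : ℝ) * ((κr * κt) *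
          (auxLMax P βmax * βmax + P.ρp * (auxC0 P βmax * βmax ^ 2))) := by
      intro k' _
      have e0 : P.ρp * (1 - κr) ≤ P.ρp := by
        nlinarith only [mul_nonneg hρp.le hκr.le]
      have e1 : P.ρp * (1 - κr) *
          (∑ m ∈ Finset.range M, (P.c κt κr m k) ^ 2 * (P.β m k') ^ 2) ≤
          P.ρp * ((M : ℝ) * ((κr * κt) * (auxC0 P βmax * βmax ^ 2))) := by
        have h1' := mul_le_mul_of_nonneg_right e0 (hT2nn k')
        have h2'' := mul_le_mul_of_nonneg_left (hT2 k') hρp.le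
        linarith only [h1', h2'']
      have hbr_nn : 0 ≤ (∑ m ∈ Finset.range M, P.lam κt κr m k * P.β m k') +
          P.ρp * (1 - κr) * ∑ m ∈ Finset.range M, (P.c κt κr m k) ^ 2 * (P.β m k') ^ 2 := by
        have := mul_nonneg (mul_nonneg hρp.le (by linarith only [hκr1] : (0:ℝ) ≤ 1 - κr)) (hT2nn k')
        linarith only [this, hT1nn k']
      have hbr_ub : (∑ m ∈ Finset.range M, P.lam κt κr m k * P.β m k') +
          P.ρp * (1 - κr) * ∑ m ∈ Finset.range M, (P.c κt κr m k) ^ 2 * (P.β m k') ^ 2 ≤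
          (M : ℝ) * ((κr * κt) *
            (auxLMax P βmax * βmax + P.ρp * (auxC0 P βmax * βmax ^ 2))) := by
        linarith only [hT1 k', e1]
      calc P.γ k' * _ ≤ _ := mul_le_of_le_one_left hbr_nn (hγ k').2
        _ ≤ _ := hbr_ub
    have := Finset.sum_le_card_nsmul Finset.univ _ _ hterm
    simpa [Finset.card_univ, nsmul_eq_mul] using this
  have hκrB : κr * P.B κt κr M k ≤ (κr * κt) ^ 3 * (M : ℝ) ^ 2 := by
    have h1 := mul_le_mul_of_nonneg_left hB_ub hκr.le
    have h2' : κr * ((P.K : ℝ) * ((M : ℝ) * ((κr * κt) *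
        (auxLMax P βmax * βmax + P.ρp * (auxC0 P βmax * βmax ^ 2))))) =
        auxCB P βmax κt * ((κr * κt) ^ 2 * (M : ℝ)) := by
      unfold auxCB
      field_simp
    have h3' : auxCB P βmax κt * ((κr * κt) ^ 2 * (M : ℝ)) ≤
        (κr * κt * (M : ℝ)) * ((κr * κt) ^ 2 * (M : ℝ)) :=
      mul_le_mul_of_nonneg_right h2 (by positivity)
    have h4 : (κr * κt * (M : ℝ)) * ((κr * κt) ^ 2 * (M : ℝ)) =
        (κr * κt) ^ 3 * (M : ℝ) ^ 2 := by ring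
    linarith only [h1, h2', h3', h4]
  -- bound on C
  have hU : ∀ k' : Fin P.K,
      (∑ m ∈ Finset.range M, P.lam κt κr m k * (P.β m k' / P.β m k)) ≤
      (M : ℝ) * ((κr * κt) * (auxLMax P βmax * βmax / βmin)) := by
    intro k'
    have hper : ∀ m ∈ Finset.range M, P.lam κt κr m k * (P.β m k' / P.β m k) ≤
        (κr * κt) * (auxLMax P βmax * βmax / βmin) := by
      intro m _
      have hb1 := (hβ m k).1
      have hratio : P.β m k' / P.β m k ≤ βmax / βmin :=
        div_le_div₀ hβmax.le (hβ m k').2 hβmin hb1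
      have hrnn : 0 ≤ P.β m k' / P.β m k :=
        div_nonneg (le_trans hβmin.le (hβ m k').1) (le_trans hβmin.le hb1)
      calc P.lam κt κr m k * (P.β m k' / P.β m k) ≤
            ((κr * κt) * auxLMax P βmax) * (βmax / βmin) :=
            mul_le_mul (key m).2.1 hratio hrnn (by positivity)
        _ = (κr * κt) * (auxLMax P βmax * βmax / βmin) := by ring
    have := Finset.sum_le_card_nsmul (Finset.range M) _ _ hper
    simpa [Finset.card_range, nsmul_eq_mul] using this
  have hUnn : ∀ k' : Fin P.K,
      0 ≤ ∑ m ∈ Finset.range M, P.lam κt κr m k * (P.β m k' / P.β m k) :=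
    fun k' => Finset.sum_nonneg fun m _ => mul_nonneg (hlam_nn m)
      (div_nonneg (le_trans hβmin.le (hβ m k').1) (le_trans hβmin.le (hβ m k).1))
  have hC_ub : P.C κt κr M k ≤ (P.K : ℝ) * ((1 + 1 / (κt * (P.τ : ℝ))) *
      ((M : ℝ) * ((κr * κt) * (auxLMax P βmax * βmax / βmin))) ^ 2) := by
    unfold Params.C
    have hterm : ∀ k' ∈ Finset.univ,
        P.γ k' * (P.δ k k' + (1 - κt) / (κt * (P.τ : ℝ))) *
          (∑ m ∈ Finset.range M, P.lam κt κr m k * (P.β m k' / P.β m k)) ^ 2 ≤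
        (1 + 1 / (κt * (P.τ : ℝ))) *
          ((M : ℝ) * ((κr * κt) * (auxLMax P βmax * βmax / βmin))) ^ 2 := by
      intro k' _
      have hd1 := (hδ k k').1
      have hd2 := (hδ k k').2
      have he_nn : 0 ≤ (1 - κt) / (κt * (P.τ : ℝ)) :=
        div_nonneg (by linarith only [hκt1]) (by positivity)
      have he_ub : (1 - κt) / (κt * (P.τ : ℝ)) ≤ 1 / (κt * (P.τ : ℝ)) :=
        (div_le_div_iff_of_pos_right (by positivity)).mpr (by linarith)
      have hcoef_nn : 0 ≤ P.δ k k' + (1 - κt) / (κt * (P.τ : ℝ)) := by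
        linarith only [hd1, he_nn]
      have hcoef_ub : P.γ k' * (P.δ k k' + (1 - κt) / (κt * (P.τ : ℝ))) ≤
          1 + 1 / (κt * (P.τ : ℝ)) := by
        have := mul_le_of_le_one_left hcoef_nn (hγ k').2
        linarith only [this, he_ub, hd2]
      have hU2 : (∑ m ∈ Finset.range M, P.lam κt κr m k * (P.β m k' / P.β m k)) ^ 2 ≤
          ((M : ℝ) * ((κr * κt) * (auxLMax P βmax * βmax / βmin))) ^ 2 :=
        pow_le_pow_left₀ (hUnn k') (hU k') 2
      exact mul_le_mul hcoef_ub hU2 (sq_nonneg _) (by positivity)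
    have := Finset.sum_le_card_nsmul Finset.univ _ _ hterm
    simpa [Finset.card_univ, nsmul_eq_mul] using this
  have hκrC : κr * P.C κt κr M k ≤
      auxCC P βmin βmax κt * ((κr * κt) ^ 3 * (M : ℝ) ^ 2) := by
    have h1 := mul_le_mul_of_nonneg_left hC_ub hκr.le
    refine le_trans h1 (le_of_eq ?_)
    unfold auxCC
    field_simp
  -- bound on D and E
  have hD_ub : P.D κt κr M k ≤ (M : ℝ) * ((P.K : ℝ) * ((κr * κt) *
      (auxLMax P βmax * βmax + auxC0 P βmax * P.ρp * βmax ^ 2 +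
        auxC0 P βmax * P.ρp * (βmax * ((P.τ : ℝ) + 1))))) := by
    unfold Params.D
    have hrow : ∀ m ∈ Finset.range M, (∑ k' : Fin P.K, P.γ k' *
        (P.lam κt κr m k * P.β m k' +
          (P.c κt κr m k) ^ 2 * (1 - κr) * P.ρp * (P.β m k') ^ 2 +
          (P.c κt κr m k) ^ 2 * κr * P.ρp * P.β m k' *
            ((P.τ : ℝ) * κt * P.δ k k' + (1 - κt)))) ≤
        (P.K : ℝ) * ((κr * κt) *
          (auxLMax P βmax * βmax + auxC0 P βmax * P.ρp * βmax ^ 2 +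
            auxC0 P βmax * P.ρp * (βmax * ((P.τ : ℝ) + 1)))) := by
      intro m _
      have hterm : ∀ k' ∈ Finset.univ, P.γ k' *
          (P.lam κt κr m k * P.β m k' +
            (P.c κt κr m k) ^ 2 * (1 - κr) * P.ρp * (P.β m k') ^ 2 +
            (P.c κt κr m k) ^ 2 * κr * P.ρp * P.β m k' *
              ((P.τ : ℝ) * κt * P.δ k k' + (1 - κt))) ≤
          (κr * κt) * (auxLMax P βmax * βmax + auxC0 P βmax * P.ρp * βmax ^ 2 +
            auxC0 P βmax * P.ρp * (βmax * ((P.τ : ℝ) + 1))) := by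
        intro k' _
        have hb := (hβ m k').1
        have hb' := (hβ m k').2
        have hbnn : 0 ≤ P.β m k' := le_trans hβmin.le hb
        have hcsq := (key m).2.2
        have hcnn := sq_nonneg (P.c κt κr m k)
        have hd1 := (hδ k k').1
        have hd2 := (hδ k k').2
        have p1 := hlamβ m k'
        have h1a : (P.c κt κr m k) ^ 2 * (1 - κr) ≤ (κr * κt) * auxC0 P βmax := by
          nlinarith only [hcsq, mul_nonneg hcnn hκr.le]
        have h1b : (P.c κt κr m k) ^ 2 * κr ≤ (κr * κt) * auxC0 P βmax := by
          nlinarith only [hcsq, mul_nonneg hcnn (by linarith only [hκr1] : (0:ℝ) ≤ 1 - κr)]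
        have p2 : (P.c κt κr m k) ^ 2 * (1 - κr) * P.ρp * (P.β m k') ^ 2 ≤
            (κr * κt) * (auxC0 P βmax * P.ρp * βmax ^ 2) := by
          have hsq : (P.β m k') ^ 2 ≤ βmax ^ 2 := pow_le_pow_left₀ hbnn hb' 2
          calc (P.c κt κr m k) ^ 2 * (1 - κr) * P.ρp * (P.β m k') ^ 2 ≤
              (((κr * κt) * auxC0 P βmax) * P.ρp) * βmax ^ 2 :=
                mul_le_mul (mul_le_mul_of_nonneg_right h1a hρp.le) hsq
                  (sq_nonneg _) (by positivity)
            _ = (κr * κt) * (auxC0 P βmax * P.ρp * βmax ^ 2) := by ring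
        have hf_nn : 0 ≤ (P.τ : ℝ) * κt * P.δ k k' + (1 - κt) := by
          have h0 : 0 ≤ (P.τ : ℝ) * κt * P.δ k k' := mul_nonneg (by positivity) hd1
          linarith
        have hf_ub : (P.τ : ℝ) * κt * P.δ k k' + (1 - κt) ≤ (P.τ : ℝ) + 1 := by
          have hp : κt * P.δ k k' ≤ 1 :=
            le_trans (mul_le_of_le_one_right hκt.le hd2) hκt1.le
          have h5 := mul_le_mul_of_nonneg_left hp hτpos.le
          nlinarith only [h5, hκt]
        have p3 : (P.c κt κr m k) ^ 2 * κr * P.ρp * P.β m k' *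
            ((P.τ : ℝ) * κt * P.δ k k' + (1 - κt)) ≤
            (κr * κt) * (auxC0 P βmax * P.ρp * (βmax * ((P.τ : ℝ) + 1))) := by
          calc (P.c κt κr m k) ^ 2 * κr * P.ρp * P.β m k' *
              ((P.τ : ℝ) * κt * P.δ k k' + (1 - κt)) ≤
              ((((κr * κt) * auxC0 P βmax) * P.ρp) * βmax) * ((P.τ : ℝ) + 1) :=
                mul_le_mul
                  (mul_le_mul (mul_le_mul_of_nonneg_right h1b hρp.le) hb' hbnn
                    (by positivity))
                  hf_ub hf_nn (by positivity)
            _ = (κr * κt) * (auxC0 P βmax * P.ρp * (βmax * ((P.τ : ℝ) + 1))) := by ring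
        have hsum_nn : 0 ≤ P.lam κt κr m k * P.β m k' +
            (P.c κt κr m k) ^ 2 * (1 - κr) * P.ρp * (P.β m k') ^ 2 +
            (P.c κt κr m k) ^ 2 * κr * P.ρp * P.β m k' *
              ((P.τ : ℝ) * κt * P.δ k k' + (1 - κt)) := by
          have n1 := mul_nonneg (hlam_nn m) hbnn
          have n2 : 0 ≤ (P.c κt κr m k) ^ 2 * (1 - κr) * P.ρp * (P.β m k') ^ 2 :=
            mul_nonneg (mul_nonneg (mul_nonneg hcnn (by linarith only [hκr1])) hρp.le) (sq_nonneg _)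
          have n3 : 0 ≤ (P.c κt κr m k) ^ 2 * κr * P.ρp * P.β m k' *
              ((P.τ : ℝ) * κt * P.δ k k' + (1 - κt)) :=
            mul_nonneg (mul_nonneg (mul_nonneg (mul_nonneg hcnn hκr.le) hρp.le) hbnn) hf_nn
          linarith only [n1, n2, n3]
        calc P.γ k' * _ ≤ _ := mul_le_of_le_one_left hsum_nn (hγ k').2
          _ ≤ (κr * κt) * (auxLMax P βmax * βmax + auxC0 P βmax * P.ρp * βmax ^ 2 +
              auxC0 P βmax * P.ρp * (βmax * ((P.τ : ℝ) + 1))) := by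
            nlinarith only [p1, p2, p3]
      have := Finset.sum_le_card_nsmul Finset.univ _ _ hterm
      simpa [Finset.card_univ, nsmul_eq_mul] using this
    have := Finset.sum_le_card_nsmul (Finset.range M) _ _ hrow
    simpa [Finset.card_range, nsmul_eq_mul] using this
  have hE_ub : P.E κt κr ρu M k ≤
      P.σ2 / ρu * ((M : ℝ) * ((κr * κt) * auxLMax P βmax)) := by
    unfold Params.E
    exact mul_le_mul_of_nonneg_left hSub (by positivity)
  have hD_nn : 0 ≤ P.D κt κr M k := by
    unfold Params.D
    apply Finset.sum_nonneg; intro m _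
    apply Finset.sum_nonneg; intro k' _
    have hbnn : 0 ≤ P.β m k' := le_trans hβmin.le (hβ m k').1
    have hcnn := sq_nonneg (P.c κt κr m k)
    have hf_nn : 0 ≤ (P.τ : ℝ) * κt * P.δ k k' + (1 - κt) := by
      have h0 : 0 ≤ (P.τ : ℝ) * κt * P.δ k k' := mul_nonneg (by positivity) (hδ k k').1
      linarith only [h0, hκt1]
    have n1 := mul_nonneg (hlam_nn m) hbnn
    have n2 : 0 ≤ (P.c κt κr m k) ^ 2 * (1 - κr) * P.ρp * (P.β m k') ^ 2 :=
      mul_nonneg (mul_nonneg (mul_nonneg hcnn (by linarith only [hκr1])) hρp.le) (sq_nonneg _)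
    have n3 : 0 ≤ (P.c κt κr m k) ^ 2 * κr * P.ρp * P.β m k' *
        ((P.τ : ℝ) * κt * P.δ k k' + (1 - κt)) :=
      mul_nonneg (mul_nonneg (mul_nonneg (mul_nonneg hcnn hκr.le) hρp.le) hbnn) hf_nn
    exact mul_nonneg (hγ k').1.le (by linarith only [n1, n2, n3])
  have hB_nn : 0 ≤ P.B κt κr M k := by
    unfold Params.B
    apply Finset.sum_nonneg; intro k' _
    apply mul_nonneg (hγ k').1.le
    have h0 : 0 ≤ P.ρp * (1 - κr) := mul_nonneg hρp.le (by linarith only [hκr1])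
    have := mul_nonneg h0 (hT2nn k')
    linarith only [this, hT1nn k']
  have hE_nn : 0 ≤ P.E κt κr ρu M k := by
    unfold Params.E
    exact mul_nonneg (by positivity) hSpos.le
  have hDE : (1 - κr) * P.D κt κr M k + P.E κt κr ρu M k ≤
      (κr * κt) ^ 3 * (M : ℝ) ^ 2 := by
    have h1 : (1 - κr) * P.D κt κr M k ≤ P.D κt κr M k := by
      nlinarith only [mul_nonneg hκr.le hD_nn]
    have h2' : P.D κt κr M k + P.E κt κr ρu M k ≤
        auxCD P βmax ρu * ((κr * κt) * (M : ℝ)) := by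
      unfold auxCD
      linarith only [hD_ub, hE_ub]
    have h3' : auxCD P βmax ρu * ((κr * κt) * (M : ℝ)) ≤
        ((κr * κt) ^ 2 * (M : ℝ)) * ((κr * κt) * (M : ℝ)) :=
      mul_le_mul_of_nonneg_right h3 (by positivity)
    have h4 : ((κr * κt) ^ 2 * (M : ℝ)) * ((κr * κt) * (M : ℝ)) =
        (κr * κt) ^ 3 * (M : ℝ) ^ 2 := by ring
    linarith only [h1, h2', h3', h4]
  -- positivity of the SINR denominator
  have hCk : P.γ k * (1 + (1 - κt) / (κt * (P.τ : ℝ))) *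
      (∑ m ∈ Finset.range M, P.lam κt κr m k) ^ 2 ≤ P.C κt κr M k := by
    unfold Params.C
    have hSk : (∑ m ∈ Finset.range M, P.lam κt κr m k * (P.β m k / P.β m k)) =
        ∑ m ∈ Finset.range M, P.lam κt κr m k := by
      refine Finset.sum_congr rfl fun m _ => ?_
      rw [div_self (ne_of_gt (lt_of_lt_of_le hβmin (hβ m k).1)), mul_one]
    have hnn : ∀ k' ∈ (Finset.univ : Finset (Fin P.K)), 0 ≤
        P.γ k' * (P.δ k k' + (1 - κt) / (κt * (P.τ : ℝ))) *
          (∑ m ∈ Finset.range M, P.lam κt κr m k * (P.β m k' / P.β m k)) ^ 2 := by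
      intro k' _
      have c2 : 0 ≤ (1 - κt) / (κt * (P.τ : ℝ)) :=
        div_nonneg (by linarith only [hκt1]) (by positivity)
      have c1 : 0 ≤ P.δ k k' + (1 - κt) / (κt * (P.τ : ℝ)) := by
        linarith only [c2, (hδ k k').1]
      exact mul_nonneg (mul_nonneg (hγ k').1.le c1) (sq_nonneg _)
    have h := Finset.single_le_sum (f := fun k' : Fin P.K =>
        P.γ k' * (P.δ k k' + (1 - κt) / (κt * (P.τ : ℝ))) *
          (∑ m ∈ Finset.range M, P.lam κt κr m k * (P.β m k' / P.β m k)) ^ 2)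
      hnn (Finset.mem_univ k)
    have h' : P.γ k * (P.δ k k + (1 - κt) / (κt * (P.τ : ℝ))) *
        (∑ m ∈ Finset.range M, P.lam κt κr m k * (P.β m k / P.β m k)) ^ 2 ≤
        ∑ k' : Fin P.K, P.γ k' * (P.δ k k' + (1 - κt) / (κt * (P.τ : ℝ))) *
          (∑ m ∈ Finset.range M, P.lam κt κr m k * (P.β m k' / P.β m k)) ^ 2 := h
    rw [hδdiag k, hSk] at h'
    exact h'
  have hDn_pos : 0 < κr * P.B κt κr M k + κr * P.C κt κr M k - κr * κt * P.A κt κr M k +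
      (1 - κr) * P.D κt κr M k + P.E κt κr ρu M k := by
    have h1 : κr * (P.γ k * (1 + (1 - κt) / (κt * (P.τ : ℝ))) *
        (∑ m ∈ Finset.range M, P.lam κt κr m k) ^ 2) ≤ κr * P.C κt κr M k :=
      mul_le_mul_of_nonneg_left hCk hκr.le
    have hgap : 0 < κr * (P.γ k * (1 + (1 - κt) / (κt * (P.τ : ℝ))) *
        (∑ m ∈ Finset.range M, P.lam κt κr m k) ^ 2) -
        κr * κt * (P.γ k * (∑ m ∈ Finset.range M, P.lam κt κr m k) ^ 2) := by
      have he : κr * (P.γ k * (1 + (1 - κt) / (κt * (P.τ : ℝ))) *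
          (∑ m ∈ Finset.range M, P.lam κt κr m k) ^ 2) -
          κr * κt * (P.γ k * (∑ m ∈ Finset.range M, P.lam κt κr m k) ^ 2) =
          κr * P.γ k * (∑ m ∈ Finset.range M, P.lam κt κr m k) ^ 2 *
            ((1 - κt) + (1 - κt) / (κt * (P.τ : ℝ))) := by ring
      rw [he]
      have hx : 0 < (1 - κt) + (1 - κt) / (κt * (P.τ : ℝ)) := by
        have h6 : 0 ≤ (1 - κt) / (κt * (P.τ : ℝ)) :=
          div_nonneg (by linarith only [hκt1]) (by positivity)
        linarith only [h6, hκt1]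
      exact mul_pos (mul_pos (mul_pos hκr hγk) (pow_pos hSpos 2)) hx
    have hBnn' : 0 ≤ κr * P.B κt κr M k := mul_nonneg hκr.le hB_nn
    have hDnn' : 0 ≤ (1 - κr) * P.D κt κr M k := mul_nonneg (by linarith) hD_nn
    rw [hA_eq]
    linarith only [h1, hgap, hBnn', hDnn', hE_nn]
  have hA_nn : 0 ≤ κr * κt * P.A κt κr M k := by
    rw [hA_eq]; positivity
  have hDn_ub : κr * P.B κt κr M k + κr * P.C κt κr M k - κr * κt * P.A κt κr M k +
      (1 - κr) * P.D κt κr M k + P.E κt κr ρu M k ≤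
      (auxCC P βmin βmax κt + 2) * ((κr * κt) ^ 3 * (M : ℝ) ^ 2) := by
    nlinarith only [hκrB, hκrC, hDE, hA_nn]
  have hX : (0 : ℝ) < (κr * κt) ^ 3 * (M : ℝ) ^ 2 := by positivity
  have hfinal := div_le_div₀ hA_nn hA_lb hDn_pos hDn_ub
  have hcancel : P.γ k * auxLMin P βmin βmax ^ 2 * ((κr * κt) ^ 3 * (M : ℝ) ^ 2) /
      ((auxCC P βmin βmax κt + 2) * ((κr * κt) ^ 3 * (M : ℝ) ^ 2)) =
      P.γ k * auxLMin P βmin βmax ^ 2 / (auxCC P βmin βmax κt + 2) := by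
    rw [mul_comm (auxCC P βmin βmax κt + 2) _, ← div_div, mul_div_assoc,
      mul_comm (P.γ k * auxLMin P βmin βmax ^ 2) _, mul_div_assoc, div_self hX.ne',
      one_mul]
  constructor
  · show P.γ k * auxLMin P βmin βmax ^ 2 / (auxCC P βmin βmax κt + 2) ≤
      κr * κt * P.A κt κr M k /
        (κr * P.B κt κr M k + κr * P.C κt κr M k - κr * κt * P.A κt κr M k +
          (1 - κr) * P.D κt κr M k + P.E κt κr ρu M k)
    exact le_trans (le_of_eq hcancel.symm) hfinal
  · -- upper bound on the SINR
    have h1κt : (0 : ℝ) < 1 - κt := by linarith only [hκt1]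
    have hNub : κr * κt * P.A κt κr M k ≤
        P.γ k * auxLMax P βmax ^ 2 * ((κr * κt) ^ 3 * (M : ℝ) ^ 2) := by
      rw [hA_eq]
      have h1 : (∑ m ∈ Finset.range M, P.lam κt κr m k) ^ 2 ≤
          ((M : ℝ) * ((κr * κt) * auxLMax P βmax)) ^ 2 :=
        pow_le_pow_left₀ hSpos.le hSub 2
      calc κr * κt * (P.γ k * (∑ m ∈ Finset.range M, P.lam κt κr m k) ^ 2) ≤
          κr * κt * (P.γ k * ((M : ℝ) * ((κr * κt) * auxLMax P βmax)) ^ 2) := by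
            exact mul_le_mul_of_nonneg_left
              (mul_le_mul_of_nonneg_left h1 hγk.le) hκ.le
        _ = P.γ k * auxLMax P βmax ^ 2 * ((κr * κt) ^ 3 * (M : ℝ) ^ 2) := by ring
    have hS2 : ((M : ℝ) * ((κr * κt) * auxLMin P βmin βmax)) ^ 2 ≤
        (∑ m ∈ Finset.range M, P.lam κt κr m k) ^ 2 :=
      pow_le_pow_left₀ (by positivity) hSlb 2
    have he_nn' : 0 ≤ (1 - κt) / (κt * (P.τ : ℝ)) :=
      div_nonneg (by linarith only [hκt1]) (by positivity)
    have hCk' : κr * (P.γ k * (1 + (1 - κt) / (κt * (P.τ : ℝ))) *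
        (∑ m ∈ Finset.range M, P.lam κt κr m k) ^ 2) ≤ κr * P.C κt κr M k :=
      mul_le_mul_of_nonneg_left hCk hκr.le
    have hDn_lb : P.γ k * ((1 - κt) * auxLMin P βmin βmax ^ 2) *
        (κr * ((κr * κt) ^ 2 * (M : ℝ) ^ 2)) ≤
        κr * P.B κt κr M k + κr * P.C κt κr M k - κr * κt * P.A κt κr M k +
          (1 - κr) * P.D κt κr M k + P.E κt κr ρu M k := by
      have hBnn' : 0 ≤ κr * P.B κt κr M k := mul_nonneg hκr.le hB_nn
      have hDnn' : 0 ≤ (1 - κr) * P.D κt κr M k :=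
        mul_nonneg (by linarith only [hκr1]) hD_nn
      have step1 : P.γ k * ((1 - κt) * auxLMin P βmin βmax ^ 2) *
          (κr * ((κr * κt) ^ 2 * (M : ℝ) ^ 2)) ≤
          (κr * P.γ k * (1 - κt)) * (∑ m ∈ Finset.range M, P.lam κt κr m k) ^ 2 := by
        calc P.γ k * ((1 - κt) * auxLMin P βmin βmax ^ 2) *
            (κr * ((κr * κt) ^ 2 * (M : ℝ) ^ 2)) =
            (κr * P.γ k * (1 - κt)) *
              ((M : ℝ) * ((κr * κt) * auxLMin P βmin βmax)) ^ 2 := by ring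
          _ ≤ (κr * P.γ k * (1 - κt)) *
              (∑ m ∈ Finset.range M, P.lam κt κr m k) ^ 2 := by
            exact mul_le_mul_of_nonneg_left hS2 (by positivity)
      have step2 : (κr * P.γ k * (1 - κt)) *
          (∑ m ∈ Finset.range M, P.lam κt κr m k) ^ 2 ≤
          κr * (P.γ k * (1 + (1 - κt) / (κt * (P.τ : ℝ))) *
            (∑ m ∈ Finset.range M, P.lam κt κr m k) ^ 2) -
          κr * κt * (P.γ k * (∑ m ∈ Finset.range M, P.lam κt κr m k) ^ 2) := by
        nlinarith only [mul_nonneg (mul_nonneg (mul_nonneg hκr.le hγk.le)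
          (sq_nonneg (∑ m ∈ Finset.range M, P.lam κt κr m k))) he_nn']
      rw [hA_eq]
      linarith only [step1, step2, hCk', hBnn', hDnn', hE_nn]
    have hd_pos : 0 < P.γ k * ((1 - κt) * auxLMin P βmin βmax ^ 2) *
        (κr * ((κr * κt) ^ 2 * (M : ℝ) ^ 2)) := by positivity
    have hfin2 := div_le_div₀ (by positivity) hNub hd_pos hDn_lb
    have hcalc : P.γ k * auxLMax P βmax ^ 2 * ((κr * κt) ^ 3 * (M : ℝ) ^ 2) /
        (P.γ k * ((1 - κt) * auxLMin P βmin βmax ^ 2) *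
          (κr * ((κr * κt) ^ 2 * (M : ℝ) ^ 2))) =
        κt * auxLMax P βmax ^ 2 / ((1 - κt) * auxLMin P βmin βmax ^ 2) := by
      rw [div_eq_div_iff hd_pos.ne' (by positivity)]
      ring
    show κr * κt * P.A κt κr M k /
        (κr * P.B κt κr M k + κr * P.C κt κr M k - κr * κt * P.A κt κr M k +
          (1 - κr) * P.D κt κr M k + P.E κt κr ρu M k) ≤
      κt * auxLMax P βmax ^ 2 / ((1 - κt) * auxLMin P βmin βmax ^ 2)
    exact le_trans hfin2 (le_of_eq hcalc)


/-- Corollary 1, convergent case, non-vanishing limit: with `z_t = 0`,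
`0 < z_r < 1/2` and `κ_{t0} < 1`, the spectral efficiency of every UE does not
vanish: `liminf_{M→∞} R_k(M) > 0`. -/
theorem hardware_scaling_law_nonvanishing_liminf
    (P : Params) (hP : P.Valid) (ρu : ℝ) (hρu : 0 < ρu)
    (βmin βmax : ℝ) (hβmin : 0 < βmin)
    (hβ : ∀ m : ℕ, ∀ k : Fin P.K, βmin ≤ P.β m k ∧ P.β m k ≤ βmax)
    (κt0 κr0 : ℝ) (hκt0 : 0 < κt0 ∧ κt0 < 1) (hκr0 : 0 < κr0 ∧ κr0 ≤ 1)
    (zr : ℝ) (hzr : 0 < zr ∧ zr < 1 / 2) (k : Fin P.K) :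
    0 < Filter.liminf
      (fun M : ℕ => P.R κt0 (κr0 / (M : ℝ) ^ zr) ρu M k) Filter.atTop := by
  obtain ⟨hκt0p, hκt0l⟩ := hκt0
  obtain ⟨hκr0p, hκr0l⟩ := hκr0
  obtain ⟨hzrp, hzrl⟩ := hzr
  have hρp : 0 < P.ρp := hP.2.2.1
  have hσ2 : 0 < P.σ2 := hP.2.2.2.1
  have hγk : 0 < P.γ k := (hP.2.2.2.2.1 k).1
  have hτ1 : (1 : ℝ) ≤ (P.τ : ℝ) := by exact_mod_cast hP.2.1
  have hτpos : (0 : ℝ) < (P.τ : ℝ) := by linarith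
  have hβmax : 0 < βmax := lt_of_lt_of_le hβmin ((hβ 0 k).1.trans (hβ 0 k).2)
  have hdM : 0 < auxDMax P βmax := by unfold auxDMax; positivity
  have hlmin : 0 < auxLMin P βmin βmax := by
    unfold auxLMin
    exact div_pos (by positivity) hdM
  have hcC : 0 ≤ auxCC P βmin βmax κt0 := by unfold auxCC auxLMax; positivity
  set ε := P.γ k * auxLMin P βmin βmax ^ 2 / (auxCC P βmin βmax κt0 + 2) with hε_def
  have hεpos : 0 < ε :=
    div_pos (mul_pos hγk (pow_pos hlmin 2)) (by linarith)
  -- eventual validity of the two smallness conditions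
  have htend1 : Filter.Tendsto (fun M : ℕ => κr0 * κt0 * (M : ℝ) ^ (1 - zr))
      Filter.atTop Filter.atTop :=
    ((tendsto_rpow_atTop (by linarith : (0:ℝ) < 1 - zr)).comp
      tendsto_natCast_atTop_atTop).const_mul_atTop (mul_pos hκr0p hκt0p)
  have htend2 : Filter.Tendsto (fun M : ℕ => (κr0 * κt0) ^ 2 * (M : ℝ) ^ (1 - 2 * zr))
      Filter.atTop Filter.atTop :=
    ((tendsto_rpow_atTop (by linarith : (0:ℝ) < 1 - 2 * zr)).comp
      tendsto_natCast_atTop_atTop).const_mul_atTop (by positivity)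
  have hev1 : ∀ᶠ M : ℕ in Filter.atTop,
      auxCB P βmax κt0 ≤ (κr0 / (M : ℝ) ^ zr * κt0) * M := by
    filter_upwards [htend1.eventually_ge_atTop (auxCB P βmax κt0),
      Filter.eventually_ge_atTop 1] with M hM1 hM2
    have hMpos : (0 : ℝ) < (M : ℝ) := by exact_mod_cast hM2
    have hXpos : (0 : ℝ) < (M : ℝ) ^ zr := Real.rpow_pos_of_pos hMpos zr
    have h1zr : (M : ℝ) ^ (1 - zr) = (M : ℝ) / (M : ℝ) ^ zr := by
      rw [Real.rpow_sub hMpos, Real.rpow_one]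
    have heq : (κr0 / (M : ℝ) ^ zr * κt0) * M = κr0 * κt0 * (M : ℝ) ^ (1 - zr) := by
      rw [h1zr]
      field_simp
    rw [heq]
    exact hM1
  have hev2 : ∀ᶠ M : ℕ in Filter.atTop,
      auxCD P βmax ρu ≤ (κr0 / (M : ℝ) ^ zr * κt0) ^ 2 * M := by
    filter_upwards [htend2.eventually_ge_atTop (auxCD P βmax ρu),
      Filter.eventually_ge_atTop 1] with M hM1 hM2
    have hMpos : (0 : ℝ) < (M : ℝ) := by exact_mod_cast hM2
    have hXpos : (0 : ℝ) < (M : ℝ) ^ zr := Real.rpow_pos_of_pos hMpos zr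
    have e2 : (M : ℝ) ^ (2 * zr) = (M : ℝ) ^ zr * (M : ℝ) ^ zr := by
      rw [← Real.rpow_add hMpos]
      congr 1
      ring
    have h2zr : (M : ℝ) ^ (1 - 2 * zr) = (M : ℝ) / ((M : ℝ) ^ zr * (M : ℝ) ^ zr) := by
      rw [Real.rpow_sub hMpos, Real.rpow_one, e2]
    have heq : (κr0 / (M : ℝ) ^ zr * κt0) ^ 2 * M =
        (κr0 * κt0) ^ 2 * (M : ℝ) ^ (1 - 2 * zr) := by
      rw [h2zr]
      field_simp
    rw [heq]
    exact hM1
  have hev : ∀ᶠ M : ℕ in Filter.atTop,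
      Real.logb 2 (1 + ε) ≤ P.R κt0 (κr0 / (M : ℝ) ^ zr) ρu M k ∧
      P.R κt0 (κr0 / (M : ℝ) ^ zr) ρu M k ≤
        Real.logb 2 (1 + κt0 * auxLMax P βmax ^ 2 /
          ((1 - κt0) * auxLMin P βmin βmax ^ 2)) := by
    filter_upwards [hev1, hev2, Filter.eventually_ge_atTop 1] with M h1 h2 hM
    have hM1 : (1 : ℝ) ≤ (M : ℝ) := by exact_mod_cast hM
    have hMpos : (0 : ℝ) < (M : ℝ) := by linarith
    have hX1 : (1 : ℝ) ≤ (M : ℝ) ^ zr := Real.one_le_rpow hM1 hzrp.le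
    have hκrp : 0 < κr0 / (M : ℝ) ^ zr := div_pos hκr0p (by linarith)
    have hκr1 : κr0 / (M : ℝ) ^ zr ≤ 1 := by
      rw [div_le_one (by linarith)]
      linarith
    have hs := aux_sinr_ge P hP ρu hρu βmin βmax hβmin hβ κt0 (κr0 / (M : ℝ) ^ zr)
      hκt0p hκt0l hκrp hκr1 k M hM h1 h2
    rw [← hε_def] at hs
    obtain ⟨hs1, hs2⟩ := hs
    refine ⟨?_, ?_⟩ <;> unfold Params.R
    · exact Real.logb_le_logb_of_le one_lt_two (by linarith) (by linarith)
    · exact Real.logb_le_logb_of_le one_lt_two (by linarith) (by linarith)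
  have hco : Filter.IsCoboundedUnder (· ≥ ·) Filter.atTop
      (fun M : ℕ => P.R κt0 (κr0 / (M : ℝ) ^ zr) ρu M k) :=
    Filter.IsCoboundedUnder.of_frequently_le
      ((hev.mono fun M h => h.2).frequently)
  have hle := Filter.le_liminf_of_le hco (hev.mono fun M h => h.1)
  have hlog : 0 < Real.logb 2 (1 + ε) := Real.logb_pos one_lt_two (by linarith)
  linarith
end
end

section
/- Vanishing of non-coherent terms (intermediate step in the proof of Corollary 1): in the asymptotic setting with z_t = 0 and 0 ≤ z_r < 1/2, for every UE index k each of the three sequences B_k(M)/(κ_{t0} A_k(M)), (1 − κ_r(M)) D_k(M)/(κ_r(M) κ_{t0} A_k(M)), and E_k(M)/(κ_r(M) κ_{t0} A_k(M)) converges to 0 as M → ∞. -/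
open Finset Filter Topology

noncomputable section

set_option maxHeartbeats 2000000 in
private lemma ratio_bounds (P : Params) (hP : P.Valid) (ρu : ℝ) (hρu : 0 < ρu)
    (βmin βmax : ℝ) (hβmin : 0 < βmin)
    (hβ : ∀ m : ℕ, ∀ kk : Fin P.K, βmin ≤ P.β m kk ∧ P.β m kk ≤ βmax)
    (κt : ℝ) (hκt : 0 < κt ∧ κt ≤ 1) (k : Fin P.K) :
    ∃ CB CD CE : ℝ,
      ∀ κr : ℝ, 0 < κr → κr ≤ 1 → ∀ M : ℕ, 1 ≤ M →
        (0 ≤ P.B κt κr M k / (κt * P.A κt κr M k) ∧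
          P.B κt κr M k / (κt * P.A κt κr M k) ≤ CB / ((M : ℝ) * κr ^ 2)) ∧
        (0 ≤ (1 - κr) * P.D κt κr M k / (κr * κt * P.A κt κr M k) ∧
          (1 - κr) * P.D κt κr M k / (κr * κt * P.A κt κr M k) ≤ CD / ((M : ℝ) * κr ^ 2)) ∧
        (0 ≤ P.E κt κr ρu M k / (κr * κt * P.A κt κr M k) ∧
          P.E κt κr ρu M k / (κr * κt * P.A κt κr M k) ≤ CE / ((M : ℝ) * κr ^ 2)) := by
  obtain ⟨hK, hτ, hρp, hσ2, hγ, hδ, hδd⟩ := hP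
  obtain ⟨hκtp, hκtl⟩ := hκt
  have hβpos : ∀ m kk, 0 < P.β m kk := fun m kk => lt_of_lt_of_le hβmin (hβ m kk).1
  have hβub : ∀ m kk, P.β m kk ≤ βmax := fun m kk => (hβ m kk).2
  have hβmax : 0 < βmax := lt_of_lt_of_le hβmin ((hβ 0 k).1.trans (hβ 0 k).2)
  have hτR : (1:ℝ) ≤ (P.τ : ℝ) := by exact_mod_cast hτ
  have hτ0 : (0:ℝ) < (P.τ : ℝ) := by linarith
  have hKR : (1:ℝ) ≤ (P.K : ℝ) := by exact_mod_cast hK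
  obtain ⟨Dm, hDmpos, hDmdef⟩ : ∃ Dm : ℝ, 0 < Dm ∧
      Dm = P.ρp * ((P.K : ℝ) * (βmax * ((P.τ : ℝ) + 1))) + P.σ2 :=
    ⟨_, by positivity, rfl⟩
  obtain ⟨L1, hL1, hL1def⟩ : ∃ L1 : ℝ, 0 < L1 ∧
      L1 = (P.τ : ℝ) * P.ρp * κt * βmin ^ 2 / Dm :=
    ⟨_, div_pos (mul_pos (mul_pos (mul_pos hτ0 hρp) hκtp) (by positivity)) hDmpos, rfl⟩
  obtain ⟨L2, hL2, hL2def⟩ : ∃ L2 : ℝ, 0 < L2 ∧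
      L2 = (P.τ : ℝ) * P.ρp * κt * βmax ^ 2 / P.σ2 :=
    ⟨_, div_pos (mul_pos (mul_pos (mul_pos hτ0 hρp) hκtp) (by positivity)) hσ2, rfl⟩
  obtain ⟨C2, hC2, hC2def⟩ : ∃ C2 : ℝ, 0 < C2 ∧
      C2 = (P.τ : ℝ) * P.ρp * κt * βmax ^ 2 / P.σ2 ^ 2 :=
    ⟨_, div_pos (mul_pos (mul_pos (mul_pos hτ0 hρp) hκtp) (by positivity)) (by positivity), rfl⟩
  refine ⟨(P.K : ℝ) * (L2 * βmax + P.ρp * (C2 * βmax ^ 2)) / (κt * P.γ k * L1 ^ 2),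
    (P.K : ℝ) * (L2 * βmax + C2 * P.ρp * βmax ^ 2 + C2 * P.ρp * (βmax * ((P.τ : ℝ) + 1))) /
      (κt * P.γ k * L1 ^ 2),
    (P.σ2 / ρu) * L2 / (κt * P.γ k * L1 ^ 2), ?_⟩
  intro κr hκr0 hκr1 M hM
  have hγk1 : 0 < P.γ k := (hγ k).1
  have hγk2 : P.γ k ≤ 1 := (hγ k).2
  have hκtne : κt ≠ 0 := ne_of_gt hκtp
  have hγkne : P.γ k ≠ 0 := ne_of_gt hγk1
  have hL1ne : L1 ≠ 0 := ne_of_gt hL1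
  have hκrne : κr ≠ 0 := ne_of_gt hκr0
  have hρune : ρu ≠ 0 := ne_of_gt hρu
  have hσ2ne : P.σ2 ≠ 0 := ne_of_gt hσ2
  have hDmne : Dm ≠ 0 := ne_of_gt hDmpos
  -- pointwise bounds on λ and c²
  have key : ∀ m : ℕ,
      κr * L1 ≤ P.lam κt κr m k ∧ P.lam κt κr m k ≤ κr * L2 ∧
      0 ≤ (P.c κt κr m k) ^ 2 ∧ (P.c κt κr m k) ^ 2 ≤ κr * C2 := by
    intro m
    set den : ℝ := P.ρp * (∑ k' : Fin P.K, P.β m k' *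
      (κr * κt * (P.τ : ℝ) * P.δ k k' + (1 - κr * κt))) + P.σ2 with hdendef
    clear_value den
    have hw : ∀ k' : Fin P.K, 0 ≤ κr * κt * (P.τ : ℝ) * P.δ k k' + (1 - κr * κt) ∧
        κr * κt * (P.τ : ℝ) * P.δ k k' + (1 - κr * κt) ≤ (P.τ : ℝ) + 1 := by
      intro k'
      have hδ1 := (hδ k k').1
      have hδ2 := (hδ k k').2
      have hκκ0 : 0 ≤ κr * κt := mul_nonneg hκr0.le hκtp.le
      have hκκ1 : κr * κt ≤ 1 := mul_le_one₀ hκr1 hκtp.le hκtl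
      constructor
      · have h1 : 0 ≤ κr * κt * (P.τ : ℝ) * P.δ k k' :=
          mul_nonneg (mul_nonneg hκκ0 hτ0.le) hδ1
        linarith
      · have hu : κr * κt * P.δ k k' ≤ 1 := mul_le_one₀ hκκ1 hδ1 hδ2
        have h2 := mul_le_mul_of_nonneg_right hu hτ0.le
        have h3 : 0 ≤ κr * κt := hκκ0
        linarith [h2]
    have hden1 : P.σ2 ≤ den := by
      have : 0 ≤ ∑ k' : Fin P.K, P.β m k' *
          (κr * κt * (P.τ : ℝ) * P.δ k k' + (1 - κr * κt)) :=
        Finset.sum_nonneg fun k' _ => mul_nonneg (hβpos m k').le (hw k').1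
      rw [hdendef]
      linarith [mul_nonneg hρp.le this]
    have hden2 : den ≤ Dm := by
      have hs : ∑ k' : Fin P.K, P.β m k' *
          (κr * κt * (P.τ : ℝ) * P.δ k k' + (1 - κr * κt)) ≤
          (P.K : ℝ) * (βmax * ((P.τ : ℝ) + 1)) := by
        have := Finset.sum_le_card_nsmul Finset.univ
          (fun k' : Fin P.K => P.β m k' * (κr * κt * (P.τ : ℝ) * P.δ k k' + (1 - κr * κt)))
          (βmax * ((P.τ : ℝ) + 1))
          (fun k' _ => mul_le_mul (hβub m k') (hw k').2 (hw k').1 hβmax.le)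
        simpa [Finset.card_univ, nsmul_eq_mul] using this
      rw [hdendef, hDmdef]
      have := mul_le_mul_of_nonneg_left hs hρp.le
      linarith
    have hdenpos : 0 < den := lt_of_lt_of_le hσ2 hden1
    have hs0 : 0 ≤ (P.τ : ℝ) * P.ρp * κr * κt := by positivity
    have hlam : P.lam κt κr m k = ((P.τ : ℝ) * P.ρp * κr * κt) * (P.β m k) ^ 2 / den := by
      have h1 : Real.sqrt ((P.τ : ℝ) * P.ρp * κr * κt) * P.β m k *
          (Real.sqrt ((P.τ : ℝ) * P.ρp * κr * κt) * P.β m k / den) =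
          Real.sqrt ((P.τ : ℝ) * P.ρp * κr * κt) * Real.sqrt ((P.τ : ℝ) * P.ρp * κr * κt) *
            (P.β m k) ^ 2 / den := by ring
      rw [Params.lam, Params.c, ← hdendef, h1, Real.mul_self_sqrt hs0]
    have hcsq : (P.c κt κr m k) ^ 2 = ((P.τ : ℝ) * P.ρp * κr * κt) * (P.β m k) ^ 2 / den ^ 2 := by
      rw [Params.c, ← hdendef, div_pow, mul_pow, Real.sq_sqrt hs0]
    refine ⟨?_, ?_, by positivity, ?_⟩
    · rw [hlam]
      have heq : κr * L1 = ((P.τ : ℝ) * P.ρp * κr * κt) * βmin ^ 2 / Dm := by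
        rw [hL1def]; field_simp
      rw [heq]
      exact div_le_div₀ (by positivity)
        (mul_le_mul_of_nonneg_left (pow_le_pow_left₀ hβmin.le (hβ m k).1 2) hs0)
        hdenpos hden2
    · rw [hlam]
      have heq : κr * L2 = ((P.τ : ℝ) * P.ρp * κr * κt) * βmax ^ 2 / P.σ2 := by
        rw [hL2def]; field_simp
      rw [heq]
      exact div_le_div₀ (by positivity)
        (mul_le_mul_of_nonneg_left (pow_le_pow_left₀ (hβpos m k).le (hβub m k) 2) hs0)
        hσ2 hden1
    · rw [hcsq]
      have heq : κr * C2 = ((P.τ : ℝ) * P.ρp * κr * κt) * βmax ^ 2 / P.σ2 ^ 2 := by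
        rw [hC2def]; field_simp
      rw [heq]
      exact div_le_div₀ (by positivity)
        (mul_le_mul_of_nonneg_left (pow_le_pow_left₀ (hβpos m k).le (hβub m k) 2) hs0)
        (by positivity) (pow_le_pow_left₀ hσ2.le hden1 2)
  have hMR : (1:ℝ) ≤ (M : ℝ) := by exact_mod_cast hM
  have hM0 : (0:ℝ) < (M : ℝ) := by linarith
  -- lower bound on A
  have hsumlam_lb : (M : ℝ) * (κr * L1) ≤ ∑ m ∈ Finset.range M, P.lam κt κr m k := by
    have := Finset.card_nsmul_le_sum (Finset.range M)
      (fun m => P.lam κt κr m k) (κr * L1) (fun m _ => (key m).1)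
    simpa [Finset.card_range, nsmul_eq_mul] using this
  have hsumlam_ub : ∑ m ∈ Finset.range M, P.lam κt κr m k ≤ (M : ℝ) * (κr * L2) := by
    have := Finset.sum_le_card_nsmul (Finset.range M)
      (fun m => P.lam κt κr m k) (κr * L2) (fun m _ => (key m).2.1)
    simpa [Finset.card_range, nsmul_eq_mul] using this
  have hA_lb : P.γ k * ((M : ℝ) * (κr * L1)) ^ 2 ≤ P.A κt κr M k := by
    rw [Params.A]
    have h0 : 0 ≤ (M : ℝ) * (κr * L1) := by positivity
    exact mul_le_mul_of_nonneg_left (pow_le_pow_left₀ h0 hsumlam_lb 2) hγk1.le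
  have hA_pos : 0 < P.A κt κr M k :=
    lt_of_lt_of_le (by positivity : 0 < P.γ k * ((M : ℝ) * (κr * L1)) ^ 2) hA_lb
  -- upper bound on B and nonnegativity
  have hB_nonneg : 0 ≤ P.B κt κr M k := by
    rw [Params.B]
    apply Finset.sum_nonneg
    intro k' _
    have h1 : 0 ≤ ∑ m ∈ Finset.range M, P.lam κt κr m k * P.β m k' :=
      Finset.sum_nonneg fun m _ => mul_nonneg
        (le_trans (by positivity) (key m).1) (hβpos m k').le
    have h2 : 0 ≤ ∑ m ∈ Finset.range M, (P.c κt κr m k) ^ 2 * (P.β m k') ^ 2 :=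
      Finset.sum_nonneg fun m _ => by positivity
    have h3 : 0 ≤ P.ρp * (1 - κr) := mul_nonneg hρp.le (by linarith)
    exact mul_nonneg (hγ k').1.le (add_nonneg h1 (mul_nonneg h3 h2))
  have hB_ub : P.B κt κr M k ≤
      (P.K : ℝ) * ((M : ℝ) * κr * (L2 * βmax) + P.ρp * ((M : ℝ) * κr * (C2 * βmax ^ 2))) := by
    rw [Params.B]
    have hbnd : ∀ k' : Fin P.K,
        P.γ k' * ((∑ m ∈ Finset.range M, P.lam κt κr m k * P.β m k') +
          P.ρp * (1 - κr) * ∑ m ∈ Finset.range M, (P.c κt κr m k) ^ 2 * (P.β m k') ^ 2) ≤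
        (M : ℝ) * κr * (L2 * βmax) + P.ρp * ((M : ℝ) * κr * (C2 * βmax ^ 2)) := by
      intro k'
      have hS1 : ∑ m ∈ Finset.range M, P.lam κt κr m k * P.β m k' ≤
          (M : ℝ) * (κr * L2 * βmax) := by
        have := Finset.sum_le_card_nsmul (Finset.range M)
          (fun m => P.lam κt κr m k * P.β m k') (κr * L2 * βmax)
          (fun m _ => mul_le_mul (key m).2.1 (hβub m k') (hβpos m k').le (by positivity))
        simpa [Finset.card_range, nsmul_eq_mul] using this
      have hS1nn : 0 ≤ ∑ m ∈ Finset.range M, P.lam κt κr m k * P.β m k' :=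
        Finset.sum_nonneg fun m _ => mul_nonneg
          (le_trans (by positivity) (key m).1) (hβpos m k').le
      have hS2 : ∑ m ∈ Finset.range M, (P.c κt κr m k) ^ 2 * (P.β m k') ^ 2 ≤
          (M : ℝ) * (κr * C2 * βmax ^ 2) := by
        have := Finset.sum_le_card_nsmul (Finset.range M)
          (fun m => (P.c κt κr m k) ^ 2 * (P.β m k') ^ 2) (κr * C2 * βmax ^ 2)
          (fun m _ => mul_le_mul (key m).2.2.2
            (pow_le_pow_left₀ (hβpos m k').le (hβub m k') 2) (by positivity) (by positivity))
        simpa [Finset.card_range, nsmul_eq_mul] using this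
      have hS2nn : 0 ≤ ∑ m ∈ Finset.range M, (P.c κt κr m k) ^ 2 * (P.β m k') ^ 2 :=
        Finset.sum_nonneg fun m _ => by positivity
      have hγ' := hγ k'
      have hX : 0 ≤ (∑ m ∈ Finset.range M, P.lam κt κr m k * P.β m k') +
          P.ρp * (1 - κr) * ∑ m ∈ Finset.range M, (P.c κt κr m k) ^ 2 * (P.β m k') ^ 2 := by
        have h3 : 0 ≤ P.ρp * (1 - κr) := mul_nonneg hρp.le (by linarith)
        nlinarith
      have h4 : P.ρp * (1 - κr) * (∑ m ∈ Finset.range M, (P.c κt κr m k) ^ 2 * (P.β m k') ^ 2) ≤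
          P.ρp * ((M : ℝ) * (κr * C2 * βmax ^ 2)) := by
        have h42 : (1 - κr) * (∑ m ∈ Finset.range M, (P.c κt κr m k) ^ 2 * (P.β m k') ^ 2) ≤
            ∑ m ∈ Finset.range M, (P.c κt κr m k) ^ 2 * (P.β m k') ^ 2 :=
          mul_le_of_le_one_left hS2nn (by linarith)
        calc P.ρp * (1 - κr) * (∑ m ∈ Finset.range M, (P.c κt κr m k) ^ 2 * (P.β m k') ^ 2) =
            P.ρp * ((1 - κr) * ∑ m ∈ Finset.range M, (P.c κt κr m k) ^ 2 * (P.β m k') ^ 2) := by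
              ring
          _ ≤ P.ρp * (∑ m ∈ Finset.range M, (P.c κt κr m k) ^ 2 * (P.β m k') ^ 2) :=
              mul_le_mul_of_nonneg_left h42 hρp.le
          _ ≤ P.ρp * ((M : ℝ) * (κr * C2 * βmax ^ 2)) :=
              mul_le_mul_of_nonneg_left hS2 hρp.le
      refine le_trans (mul_le_of_le_one_left hX hγ'.2) ?_
      linarith [hS1, h4]
    refine le_trans (Finset.sum_le_sum fun k' _ => hbnd k') (le_of_eq ?_)
    simp [Finset.sum_const, Finset.card_univ, nsmul_eq_mul]
    ring
  -- bounds on D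
  have hDterm : ∀ (m : ℕ) (k' : Fin P.K),
      0 ≤ P.γ k' * (P.lam κt κr m k * P.β m k' +
        (P.c κt κr m k) ^ 2 * (1 - κr) * P.ρp * (P.β m k') ^ 2 +
        (P.c κt κr m k) ^ 2 * κr * P.ρp * P.β m k' *
          ((P.τ : ℝ) * κt * P.δ k k' + (1 - κt))) ∧
      P.γ k' * (P.lam κt κr m k * P.β m k' +
        (P.c κt κr m k) ^ 2 * (1 - κr) * P.ρp * (P.β m k') ^ 2 +
        (P.c κt κr m k) ^ 2 * κr * P.ρp * P.β m k' *
          ((P.τ : ℝ) * κt * P.δ k k' + (1 - κt))) ≤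
      κr * (L2 * βmax + C2 * P.ρp * βmax ^ 2 + C2 * P.ρp * (βmax * ((P.τ : ℝ) + 1))) := by
    intro m k'
    obtain ⟨hk1, hk2, hk3, hk4⟩ := key m
    have hlam0 : 0 ≤ P.lam κt κr m k := le_trans (by positivity) hk1
    have hβ0 := hβpos m k'
    have hβu := hβub m k'
    have hδ1 := (hδ k k').1
    have hδ2 := (hδ k k').2
    have hw0 : 0 ≤ (P.τ : ℝ) * κt * P.δ k k' + (1 - κt) := by
      have : 0 ≤ (P.τ : ℝ) * κt * P.δ k k' := by positivity
      linarith [hκtl]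
    have hw1 : (P.τ : ℝ) * κt * P.δ k k' + (1 - κt) ≤ (P.τ : ℝ) + 1 := by
      have h5 : κt * P.δ k k' ≤ 1 := mul_le_one₀ hκtl hδ1 hδ2
      nlinarith [hκtp]
    have hγ' := hγ k'
    -- three term bounds
    have ht1 : P.lam κt κr m k * P.β m k' ≤ κr * L2 * βmax :=
      mul_le_mul hk2 hβu hβ0.le (by positivity)
    have ht2 : (P.c κt κr m k) ^ 2 * (1 - κr) * P.ρp * (P.β m k') ^ 2 ≤
        κr * C2 * P.ρp * βmax ^ 2 := by
      have ha : (P.c κt κr m k) ^ 2 * (1 - κr) ≤ κr * C2 :=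
        le_trans (mul_le_of_le_one_right hk3 (by linarith)) hk4
      have hb : (P.β m k') ^ 2 ≤ βmax ^ 2 := pow_le_pow_left₀ hβ0.le hβu 2
      have hc0 : 0 ≤ (P.c κt κr m k) ^ 2 * (1 - κr) :=
        mul_nonneg hk3 (by linarith)
      have := mul_le_mul (mul_le_mul_of_nonneg_right ha hρp.le) hb (by positivity)
        (by positivity)
      linarith [this]
    have ht3 : (P.c κt κr m k) ^ 2 * κr * P.ρp * P.β m k' *
        ((P.τ : ℝ) * κt * P.δ k k' + (1 - κt)) ≤
        κr * C2 * P.ρp * (βmax * ((P.τ : ℝ) + 1)) := by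
      have ha : (P.c κt κr m k) ^ 2 * κr ≤ κr * C2 :=
        le_trans (mul_le_of_le_one_right hk3 hκr1) hk4
      have hb : P.β m k' * ((P.τ : ℝ) * κt * P.δ k k' + (1 - κt)) ≤
          βmax * ((P.τ : ℝ) + 1) :=
        mul_le_mul hβu hw1 hw0 hβmax.le
      have heq : (P.c κt κr m k) ^ 2 * κr * P.ρp * P.β m k' *
          ((P.τ : ℝ) * κt * P.δ k k' + (1 - κt)) =
          ((P.c κt κr m k) ^ 2 * κr) * P.ρp *
            (P.β m k' * ((P.τ : ℝ) * κt * P.δ k k' + (1 - κt))) := by ring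
      rw [heq]
      have hc0 : 0 ≤ (P.c κt κr m k) ^ 2 * κr := by positivity
      exact mul_le_mul (mul_le_mul_of_nonneg_right ha hρp.le)
        hb (mul_nonneg hβ0.le hw0) (by positivity)
    have ht10 : 0 ≤ P.lam κt κr m k * P.β m k' := mul_nonneg hlam0 hβ0.le
    have ht20 : 0 ≤ (P.c κt κr m k) ^ 2 * (1 - κr) * P.ρp * (P.β m k') ^ 2 := by
      have : 0 ≤ (1 - κr) := by linarith
      positivity
    have ht30 : 0 ≤ (P.c κt κr m k) ^ 2 * κr * P.ρp * P.β m k' *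
        ((P.τ : ℝ) * κt * P.δ k k' + (1 - κt)) := by
      apply mul_nonneg _ hw0
      positivity
    constructor
    · apply mul_nonneg hγ'.1.le
      linarith
    · have hXb : P.lam κt κr m k * P.β m k' +
          (P.c κt κr m k) ^ 2 * (1 - κr) * P.ρp * (P.β m k') ^ 2 +
          (P.c κt κr m k) ^ 2 * κr * P.ρp * P.β m k' *
            ((P.τ : ℝ) * κt * P.δ k k' + (1 - κt)) ≤
          κr * (L2 * βmax + C2 * P.ρp * βmax ^ 2 + C2 * P.ρp * (βmax * ((P.τ : ℝ) + 1))) := by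
        linarith [ht1, ht2, ht3]
      refine le_trans (mul_le_of_le_one_left (by linarith) hγ'.2) hXb
  have hD_nonneg : 0 ≤ P.D κt κr M k := by
    rw [Params.D]
    exact Finset.sum_nonneg fun m _ => Finset.sum_nonneg fun k' _ => (hDterm m k').1
  have hD_ub : P.D κt κr M k ≤ (M : ℝ) * ((P.K : ℝ) *
      (κr * (L2 * βmax + C2 * P.ρp * βmax ^ 2 + C2 * P.ρp * (βmax * ((P.τ : ℝ) + 1))))) := by
    rw [Params.D]
    refine le_trans (Finset.sum_le_sum fun m _ =>
      (Finset.sum_le_sum fun k' _ => (hDterm m k').2)) (le_of_eq ?_)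
    simp [Finset.sum_const, Finset.card_univ, Finset.card_range, nsmul_eq_mul]
  -- bounds on E
  have hE_nonneg : 0 ≤ P.E κt κr ρu M k := by
    rw [Params.E]
    apply mul_nonneg (by positivity)
    exact Finset.sum_nonneg fun m _ => le_trans (by positivity) (key m).1
  have hE_ub : P.E κt κr ρu M k ≤ (P.σ2 / ρu) * ((M : ℝ) * (κr * L2)) := by
    rw [Params.E]
    exact mul_le_mul_of_nonneg_left hsumlam_ub (by positivity)
  -- assemble ratios
  have hκtA : 0 < κt * P.A κt κr M k := mul_pos hκtp hA_pos
  have hκtA_lb : κt * (P.γ k * ((M : ℝ) * (κr * L1)) ^ 2) ≤ κt * P.A κt κr M k :=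
    mul_le_mul_of_nonneg_left hA_lb hκtp.le
  have hκtA_lb_pos : 0 < κt * (P.γ k * ((M : ℝ) * (κr * L1)) ^ 2) := by positivity
  have hκrκtA : 0 < κr * κt * P.A κt κr M k := mul_pos (mul_pos hκr0 hκtp) hA_pos
  have hκrκtA_lb : κr * κt * (P.γ k * ((M : ℝ) * (κr * L1)) ^ 2) ≤ κr * κt * P.A κt κr M k :=
    mul_le_mul_of_nonneg_left hA_lb (by positivity)
  have hκrκtA_lb_pos : 0 < κr * κt * (P.γ k * ((M : ℝ) * (κr * L1)) ^ 2) := by positivity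
  have hMκr : (0:ℝ) < (M : ℝ) * κr ^ 2 := by positivity
  refine ⟨⟨div_nonneg hB_nonneg hκtA.le, ?_⟩,
          ⟨?_, ?_⟩, ⟨div_nonneg hE_nonneg hκrκtA.le, ?_⟩⟩
  · calc P.B κt κr M k / (κt * P.A κt κr M k) ≤
        ((P.K : ℝ) * ((M : ℝ) * κr * (L2 * βmax) + P.ρp * ((M : ℝ) * κr * (C2 * βmax ^ 2)))) /
          (κt * (P.γ k * ((M : ℝ) * (κr * L1)) ^ 2)) :=
        div_le_div₀ (by positivity) hB_ub hκtA_lb_pos hκtA_lb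
      _ = ((P.K : ℝ) * (L2 * βmax + P.ρp * (C2 * βmax ^ 2)) / (κt * P.γ k * L1 ^ 2)) /
          ((M : ℝ) * κr) := by
        field_simp
      _ ≤ ((P.K : ℝ) * (L2 * βmax + P.ρp * (C2 * βmax ^ 2)) / (κt * P.γ k * L1 ^ 2)) /
          ((M : ℝ) * κr ^ 2) := by
        apply div_le_div_of_nonneg_left (by positivity) hMκr
        exact mul_le_mul_of_nonneg_left
          (pow_le_of_le_one hκr0.le hκr1 two_ne_zero) hM0.le
  · apply div_nonneg _ hκrκtA.le
    apply mul_nonneg _ hD_nonneg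
    linarith
  · have h1mκr : (1 - κr) * P.D κt κr M k ≤ P.D κt κr M k := by
      nlinarith
    calc (1 - κr) * P.D κt κr M k / (κr * κt * P.A κt κr M k) ≤
        ((M : ℝ) * ((P.K : ℝ) *
          (κr * (L2 * βmax + C2 * P.ρp * βmax ^ 2 + C2 * P.ρp * (βmax * ((P.τ : ℝ) + 1)))))) /
          (κr * κt * (P.γ k * ((M : ℝ) * (κr * L1)) ^ 2)) :=
        div_le_div₀ (by positivity) (le_trans h1mκr hD_ub) hκrκtA_lb_pos hκrκtA_lb
      _ = ((P.K : ℝ) * (L2 * βmax + C2 * P.ρp * βmax ^ 2 + C2 * P.ρp * (βmax * ((P.τ : ℝ) + 1))) /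
            (κt * P.γ k * L1 ^ 2)) / ((M : ℝ) * κr ^ 2) := by
        field_simp
  · calc P.E κt κr ρu M k / (κr * κt * P.A κt κr M k) ≤
        ((P.σ2 / ρu) * ((M : ℝ) * (κr * L2))) /
          (κr * κt * (P.γ k * ((M : ℝ) * (κr * L1)) ^ 2)) :=
        div_le_div₀ (by positivity) hE_ub hκrκtA_lb_pos hκrκtA_lb
      _ = ((P.σ2 / ρu) * L2 / (κt * P.γ k * L1 ^ 2)) / ((M : ℝ) * κr ^ 2) := by
        field_simp

/-- Intermediate step of Corollary 1: with `z_t = 0` and `0 ≤ z_r < 1/2`, the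
non-coherent terms vanish relative to the desired-signal term:
`B_k/(κ_{t0} A_k) → 0`, `(1−κ_r)D_k/(κ_r κ_{t0} A_k) → 0`, and
`E_k/(κ_r κ_{t0} A_k) → 0` as `M → ∞`. -/
theorem hardware_scaling_law_noncoherent_terms_vanish
    (P : Params) (hP : P.Valid) (ρu : ℝ) (hρu : 0 < ρu)
    (βmin βmax : ℝ) (hβmin : 0 < βmin)
    (hβ : ∀ m : ℕ, ∀ k : Fin P.K, βmin ≤ P.β m k ∧ P.β m k ≤ βmax)
    (κt0 κr0 : ℝ) (hκt0 : 0 < κt0 ∧ κt0 ≤ 1) (hκr0 : 0 < κr0 ∧ κr0 ≤ 1)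
    (zr : ℝ) (hzr : 0 ≤ zr ∧ zr < 1 / 2) (k : Fin P.K) :
    Filter.Tendsto
      (fun M : ℕ =>
        P.B κt0 (κr0 / (M : ℝ) ^ zr) M k /
          (κt0 * P.A κt0 (κr0 / (M : ℝ) ^ zr) M k))
      Filter.atTop (nhds 0) ∧
    Filter.Tendsto
      (fun M : ℕ =>
        (1 - κr0 / (M : ℝ) ^ zr) * P.D κt0 (κr0 / (M : ℝ) ^ zr) M k /
          (κr0 / (M : ℝ) ^ zr * κt0 * P.A κt0 (κr0 / (M : ℝ) ^ zr) M k))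
      Filter.atTop (nhds 0) ∧
    Filter.Tendsto
      (fun M : ℕ =>
        P.E κt0 (κr0 / (M : ℝ) ^ zr) ρu M k /
          (κr0 / (M : ℝ) ^ zr * κt0 * P.A κt0 (κr0 / (M : ℝ) ^ zr) M k))
      Filter.atTop (nhds 0) := by
  obtain ⟨CB, CD, CE, hbound⟩ := ratio_bounds P hP ρu hρu βmin βmax hβmin hβ κt0 hκt0 k
  have hκrfact : ∀ M : ℕ, 1 ≤ M → 0 < κr0 / (M : ℝ) ^ zr ∧ κr0 / (M : ℝ) ^ zr ≤ 1 := by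
    intro M hM
    have hM1 : (1:ℝ) ≤ (M : ℝ) := by exact_mod_cast hM
    have h1 : (1:ℝ) ≤ (M : ℝ) ^ zr := Real.one_le_rpow hM1 hzr.1
    have hMz : (0:ℝ) < (M : ℝ) ^ zr := by linarith
    constructor
    · exact div_pos hκr0.1 hMz
    · rw [div_le_one hMz]
      linarith [hκr0.2]
  have hdenom : Tendsto (fun M : ℕ => (M : ℝ) * (κr0 / (M : ℝ) ^ zr) ^ 2) atTop atTop := by
    have h1 : Tendsto (fun M : ℕ => κr0 ^ 2 * (M : ℝ) ^ (1 - zr * 2)) atTop atTop := by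
      have h2 : Tendsto (fun x : ℝ => x ^ (1 - zr * 2)) atTop atTop :=
        tendsto_rpow_atTop (by linarith [hzr.2])
      exact (h2.comp tendsto_natCast_atTop_atTop).const_mul_atTop (pow_pos hκr0.1 2)
    apply h1.congr'
    filter_upwards [eventually_ge_atTop 1] with M hM
    have hM1 : (1:ℝ) ≤ (M : ℝ) := by exact_mod_cast hM
    have hM0 : (0:ℝ) < (M : ℝ) := by linarith
    have hMz : (0:ℝ) < (M : ℝ) ^ zr := Real.rpow_pos_of_pos hM0 zr
    rw [div_pow, ← Real.rpow_natCast ((M : ℝ) ^ zr) 2, ← Real.rpow_mul hM0.le,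
      Real.rpow_sub hM0, Real.rpow_one]
    have hMz2 : (0:ℝ) < (M : ℝ) ^ (zr * (2:ℕ)) := Real.rpow_pos_of_pos hM0 _
    have hcast : ((2:ℕ):ℝ) = (2:ℝ) := by norm_num
    rw [hcast] at hMz2 ⊢
    field_simp
  have hsq : ∀ C : ℝ, Tendsto (fun M : ℕ => C / ((M : ℝ) * (κr0 / (M : ℝ) ^ zr) ^ 2))
      atTop (nhds 0) := fun C => tendsto_const_nhds.div_atTop hdenom
  refine ⟨?_, ?_, ?_⟩
  · apply squeeze_zero' ?_ ?_ (hsq CB)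
    · filter_upwards [eventually_ge_atTop 1] with M hM
      exact ((hbound _ (hκrfact M hM).1 (hκrfact M hM).2 M hM).1).1
    · filter_upwards [eventually_ge_atTop 1] with M hM
      exact ((hbound _ (hκrfact M hM).1 (hκrfact M hM).2 M hM).1).2
  · apply squeeze_zero' ?_ ?_ (hsq CD)
    · filter_upwards [eventually_ge_atTop 1] with M hM
      exact ((hbound _ (hκrfact M hM).1 (hκrfact M hM).2 M hM).2).1.1
    · filter_upwards [eventually_ge_atTop 1] with M hM
      exact ((hbound _ (hκrfact M hM).1 (hκrfact M hM).2 M hM).2).1.2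
  · apply squeeze_zero' ?_ ?_ (hsq CE)
    · filter_upwards [eventually_ge_atTop 1] with M hM
      exact ((hbound _ (hκrfact M hM).1 (hκrfact M hM).2 M hM).2).2.1
    · filter_upwards [eventually_ge_atTop 1] with M hM
      exact ((hbound _ (hκrfact M hM).1 (hκrfact M hM).2 M hM).2).2.2
end
end

section
/- Divergence of the relative noise term (intermediate step in the proof of Corollary 1): in the asymptotic setting with z_t = 0 and z_r > 1/2, for every UE index k the sequence E_k(M)/(κ_r(M) κ_{t0} A_k(M)) tends to +∞ as M → ∞. -/
open Finset Filter Topology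

noncomputable section

set_option maxHeartbeats 1000000 in
/-- Intermediate step of Corollary 1: with `z_t = 0` and `z_r > 1/2`, the
relative noise term diverges: `E_k/(κ_r κ_{t0} A_k) → +∞` as `M → ∞`. -/
theorem hardware_scaling_law_noise_term_diverges
    (P : Params) (hP : P.Valid) (ρu : ℝ) (hρu : 0 < ρu)
    (βmin βmax : ℝ) (hβmin : 0 < βmin)
    (hβ : ∀ m : ℕ, ∀ k : Fin P.K, βmin ≤ P.β m k ∧ P.β m k ≤ βmax)
    (κt0 κr0 : ℝ) (hκt0 : 0 < κt0 ∧ κt0 ≤ 1) (hκr0 : 0 < κr0 ∧ κr0 ≤ 1)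
    (zr : ℝ) (hzr : 1 / 2 < zr) (k : Fin P.K) :
    Filter.Tendsto
      (fun M : ℕ =>
        P.E κt0 (κr0 / (M : ℝ) ^ zr) ρu M k /
          (κr0 / (M : ℝ) ^ zr * κt0 * P.A κt0 (κr0 / (M : ℝ) ^ zr) M k))
      Filter.atTop Filter.atTop := by
  obtain ⟨hK, hτ, hρp, hσ2, hγ, hδ, hδd⟩ := hP
  obtain ⟨hκt0p, hκt01⟩ := hκt0
  obtain ⟨hκr0p, hκr01⟩ := hκr0
  have hγk := hγ k
  have hβpos : ∀ m : ℕ, ∀ k' : Fin P.K, 0 < P.β m k' := fun m k' =>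
    lt_of_lt_of_le hβmin (hβ m k').1
  have hβmax : 0 < βmax := lt_of_lt_of_le (hβpos 0 k) (hβ 0 k).2
  have hτpos : (0:ℝ) < (P.τ : ℝ) := by exact_mod_cast hτ
  set κ : ℕ → ℝ := fun M => κr0 / (M : ℝ) ^ zr with hκdef
  set S : ℕ → ℝ := fun M => ∑ m ∈ Finset.range M, P.lam κt0 (κ M) m k with hSdef
  set Cmax : ℝ := (P.τ : ℝ) * P.ρp * κt0 * βmax ^ 2 / P.σ2 with hCmaxdef
  have hCmaxpos : 0 < Cmax := by positivity
  -- key pointwise facts for M ≥ 1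
  have key : ∀ M : ℕ, 1 ≤ M →
      0 < S M ∧ κ M * S M ≤ κr0 ^ 2 * Cmax * (M : ℝ) ^ (1 - 2 * zr) := by
    intro M hM
    have hM1 : (1:ℝ) ≤ (M:ℝ) := by exact_mod_cast hM
    have hMpos : (0:ℝ) < (M:ℝ) := by linarith
    have hMz1 : (1:ℝ) ≤ (M:ℝ) ^ zr := Real.one_le_rpow hM1 (by linarith)
    have hMzpos : (0:ℝ) < (M:ℝ) ^ zr := by linarith
    have hκpos : 0 < κ M := div_pos hκr0p hMzpos
    have hκ1 : κ M ≤ 1 := le_trans (div_le_self hκr0p.le hMz1) hκr01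
    set q : ℝ := (P.τ : ℝ) * P.ρp * κ M * κt0 with hqdef
    have hqpos : 0 < q := by positivity
    -- per-AP bounds
    have hlam : ∀ m : ℕ, 0 < P.lam κt0 (κ M) m k ∧
        P.lam κt0 (κ M) m k ≤ q * βmax ^ 2 / P.σ2 := by
      intro m
      set D : ℝ := P.ρp * ∑ k' : Fin P.K, P.β m k' *
        (κ M * κt0 * (P.τ : ℝ) * P.δ k k' + (1 - κ M * κt0)) + P.σ2 with hDdef
      have hDσ : P.σ2 ≤ D := by
        have hsum : 0 ≤ ∑ k' : Fin P.K, P.β m k' *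
            (κ M * κt0 * (P.τ : ℝ) * P.δ k k' + (1 - κ M * κt0)) := by
          apply Finset.sum_nonneg
          intro k' _
          have h1 : 0 ≤ κ M * κt0 * (P.τ : ℝ) * P.δ k k' := by
            have := (hδ k k').1; positivity
          have h2 : κ M * κt0 ≤ 1 := by nlinarith
          have := (hβpos m k').le
          nlinarith
        nlinarith
      have hDpos : 0 < D := lt_of_lt_of_le hσ2 hDσ
      have hlameq : P.lam κt0 (κ M) m k = q * (P.β m k) ^ 2 / D := by
        rw [Params.lam, Params.c, ← hDdef, ← hqdef]
        rw [show Real.sqrt q * P.β m k * (Real.sqrt q * P.β m k / D)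
            = Real.sqrt q * Real.sqrt q * (P.β m k) ^ 2 / D from by ring,
          Real.mul_self_sqrt hqpos.le]
      constructor
      · rw [hlameq]
        exact div_pos (mul_pos hqpos (pow_pos (hβpos m k) 2)) hDpos
      · rw [hlameq]
        have hβk : P.β m k ≤ βmax := (hβ m k).2
        have hβk0 : 0 ≤ P.β m k := (hβpos m k).le
        apply div_le_div₀ (by positivity) ?_ hσ2 hDσ
        exact mul_le_mul_of_nonneg_left (pow_le_pow_left₀ hβk0 hβk 2) hqpos.le
    have hSpos : 0 < S M := by
      rw [hSdef]
      apply Finset.sum_pos (fun m _ => (hlam m).1)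
      exact Finset.nonempty_range_iff.mpr (by omega)
    refine ⟨hSpos, ?_⟩
    have hSle : S M ≤ (M : ℝ) * (q * βmax ^ 2 / P.σ2) := by
      calc S M ≤ ∑ _m ∈ Finset.range M, (q * βmax ^ 2 / P.σ2) :=
            Finset.sum_le_sum (fun m _ => (hlam m).2)
        _ = (M : ℝ) * (q * βmax ^ 2 / P.σ2) := by
            rw [Finset.sum_const, Finset.card_range, nsmul_eq_mul]
    have hrhs : κ M * ((M : ℝ) * (q * βmax ^ 2 / P.σ2))
        = κr0 ^ 2 * Cmax * (M : ℝ) ^ (1 - 2 * zr) := by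
      have h2z : (M:ℝ) ^ (2 * zr) = ((M:ℝ) ^ zr) ^ 2 := by
        rw [← Real.rpow_natCast ((M:ℝ) ^ zr) 2, ← Real.rpow_mul hMpos.le]
        norm_num [mul_comm]
      have hMeq : (M:ℝ) ^ (1 - 2 * zr) = (M:ℝ) / ((M:ℝ) ^ zr) ^ 2 := by
        rw [Real.rpow_sub hMpos, Real.rpow_one, h2z]
      rw [hMeq, hqdef, hκdef, hCmaxdef]
      field_simp
    calc κ M * S M ≤ κ M * ((M : ℝ) * (q * βmax ^ 2 / P.σ2)) := by
          exact mul_le_mul_of_nonneg_left hSle hκpos.le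
      _ = κr0 ^ 2 * Cmax * (M : ℝ) ^ (1 - 2 * zr) := hrhs
  -- the product κ M * S M tends to 0 within (0, ∞)
  have hub : Filter.Tendsto (fun M : ℕ => κr0 ^ 2 * Cmax * (M : ℝ) ^ (1 - 2 * zr))
      Filter.atTop (𝓝 0) := by
    have h1 : Filter.Tendsto (fun x : ℝ => x ^ (1 - 2 * zr)) Filter.atTop (𝓝 0) := by
      have h := tendsto_rpow_neg_atTop (y := 2 * zr - 1) (by linarith)
      have : (fun x : ℝ => x ^ (-(2 * zr - 1))) = fun x : ℝ => x ^ (1 - 2 * zr) := by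
        funext x; norm_num
      rwa [this] at h
    have h2 := (h1.comp (tendsto_natCast_atTop_atTop (R := ℝ))).const_mul (κr0 ^ 2 * Cmax)
    simpa using h2
  have hf0 : Filter.Tendsto (fun M : ℕ => κ M * S M) Filter.atTop (𝓝 0) := by
    apply tendsto_of_tendsto_of_tendsto_of_le_of_le' tendsto_const_nhds hub
    · filter_upwards [Filter.eventually_ge_atTop 1] with M hM
      have hMz : (0:ℝ) < (M:ℝ) ^ zr :=
        Real.rpow_pos_of_pos (by exact_mod_cast Nat.lt_of_lt_of_le Nat.zero_lt_one hM) _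
      exact le_of_lt (mul_pos (div_pos hκr0p hMz) (key M hM).1)
    · filter_upwards [Filter.eventually_ge_atTop 1] with M hM
      exact (key M hM).2
  have hfin : Filter.Tendsto (fun M : ℕ => κ M * S M) Filter.atTop (𝓝[>] 0) := by
    apply tendsto_nhdsWithin_of_tendsto_nhds_of_eventually_within _ hf0
    filter_upwards [Filter.eventually_ge_atTop 1] with M hM
    have hMz : (0:ℝ) < (M:ℝ) ^ zr :=
      Real.rpow_pos_of_pos (by exact_mod_cast Nat.lt_of_lt_of_le Nat.zero_lt_one hM) _
    exact mul_pos (div_pos hκr0p hMz) (key M hM).1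
  have hinv : Filter.Tendsto (fun M : ℕ => (κ M * S M)⁻¹) Filter.atTop Filter.atTop :=
    hfin.inv_tendsto_nhdsGT_zero
  have hc0 : 0 < P.σ2 / (ρu * κt0 * P.γ k) := div_pos hσ2 (mul_pos (mul_pos hρu hκt0p) hγk.1)
  have hmain := hinv.const_mul_atTop hc0
  apply Filter.Tendsto.congr' _ hmain
  filter_upwards [Filter.eventually_ge_atTop 1] with M hM
  have hMz : (0:ℝ) < (M:ℝ) ^ zr := by
    have : (1:ℝ) ≤ (M:ℝ) := by exact_mod_cast hM
    positivity
  have hκpos : 0 < κ M := div_pos hκr0p hMz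
  have hSpos := (key M hM).1
  have hE : P.E κt0 (κ M) ρu M k = (P.σ2 / ρu) * S M := rfl
  have hA : P.A κt0 (κ M) M k = P.γ k * (S M) ^ 2 := rfl
  show P.σ2 / (ρu * κt0 * P.γ k) * (κ M * S M)⁻¹
      = P.E κt0 (κ M) ρu M k / (κ M * κt0 * P.A κt0 (κ M) M k)
  rw [hE, hA]
  field_simp [hSpos.ne', hρu.ne', hκt0p.ne', hγk.1.ne', hMz.ne', hκr0p.ne']
end
end

section
/- UE hardware-quality ceiling on the spectral efficiency: if κ_t < 1, then for every UE index k and regardless of the number of APs M, the number of UEs K, and the AP hardware quality κ_r, the SINR of Theorem 1 satisfies SINR_k ≤ κ_t² τ / ( (1 − κ_t)(κ_t τ + 1) ) ≤ κ_t/(1 − κ_t), and consequently the spectral efficiency satisfies R_k = log₂(1 + SINR_k) ≤ log₂( 1/(1 − κ_t) ). This shows that the impairments in the UE transmitter hardware impose a finite spectral-efficiency limit that cannot be overcome by adding APs. -/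
open Finset Filter Topology

noncomputable section

set_option maxHeartbeats 1000000 in
/-- UE hardware-quality ceiling: if `κ_t < 1` then, independently of `M`, `K`
and `κ_r`, `SINR_k ≤ κ_t² τ / ((1−κ_t)(κ_t τ + 1)) ≤ κ_t/(1−κ_t)` and hence
`R_k ≤ log₂(1/(1−κ_t))`. -/
theorem ue_hardware_quality_ceiling
    (P : Params) (hP : P.Valid) (M : ℕ) (hM : 1 ≤ M) (ρu : ℝ) (hρu : 0 < ρu)
    (hβ : ∀ m < M, ∀ k : Fin P.K, 0 < P.β m k)
    (κt κr : ℝ) (hκt : 0 < κt ∧ κt < 1) (hκr : 0 < κr ∧ κr ≤ 1)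
    (k : Fin P.K) :
    P.SINR κt κr ρu M k ≤ κt ^ 2 * (P.τ : ℝ) / ((1 - κt) * (κt * (P.τ : ℝ) + 1)) ∧
    κt ^ 2 * (P.τ : ℝ) / ((1 - κt) * (κt * (P.τ : ℝ) + 1)) ≤ κt / (1 - κt) ∧
    P.R κt κr ρu M k ≤ Real.logb 2 (1 / (1 - κt)) := by
  obtain ⟨hK, hτ, hρp, hσ2, hγ, hδ, hδd⟩ := hP
  obtain ⟨hκt0, hκt1⟩ := hκt
  obtain ⟨hκr0, hκr1⟩ := hκr
  have hτR : (0:ℝ) < (P.τ : ℝ) := by exact_mod_cast Nat.lt_of_lt_of_le Nat.zero_lt_one hτ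
  have hκt1' : (0:ℝ) < 1 - κt := by linarith
  have hκr1' : (0:ℝ) ≤ 1 - κr := by linarith
  have hsq : 0 < Real.sqrt ((P.τ:ℝ) * P.ρp * κr * κt) := Real.sqrt_pos.2 (by positivity)
  have hc : ∀ m < M, ∀ j : Fin P.K, 0 < P.c κt κr m j := by
    intro m hm j
    have hs : 0 ≤ ∑ k' : Fin P.K, P.β m k' *
        (κr * κt * (P.τ:ℝ) * P.δ j k' + (1 - κr*κt)) := by
      apply Finset.sum_nonneg
      intro i _
      have h1 : 0 ≤ κr * κt * (P.τ:ℝ) * P.δ j i := by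
        have := (hδ j i).1; positivity
      have h2 : κr * κt ≤ 1 := by nlinarith
      exact mul_nonneg (hβ m hm i).le (by linarith)
    have hden : 0 < P.ρp * (∑ k' : Fin P.K, P.β m k' *
        (κr * κt * (P.τ:ℝ) * P.δ j k' + (1 - κr*κt))) + P.σ2 := by nlinarith
    exact div_pos (mul_pos hsq (hβ m hm j)) hden
  have hlam : ∀ m < M, ∀ j : Fin P.K, 0 < P.lam κt κr m j := by
    intro m hm j
    exact mul_pos (mul_pos hsq (hβ m hm j)) (hc m hm j)
  set S : ℝ := ∑ m ∈ Finset.range M, P.lam κt κr m k with hSdef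
  have hS : 0 < S :=
    Finset.sum_pos (fun m hm => hlam m (Finset.mem_range.1 hm) k)
      (Finset.nonempty_range_iff.2 (by omega))
  have hA : 0 < P.A κt κr M k := mul_pos (hγ k).1 (pow_pos hS 2)
  have hB : 0 ≤ P.B κt κr M k := by
    apply Finset.sum_nonneg; intro i _
    apply mul_nonneg (hγ i).1.le
    apply add_nonneg
    · apply Finset.sum_nonneg; intro m hm
      exact mul_nonneg (hlam m (Finset.mem_range.1 hm) k).le
        (hβ m (Finset.mem_range.1 hm) i).le
    · apply mul_nonneg (mul_nonneg hρp.le hκr1')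
      apply Finset.sum_nonneg; intro m _; positivity
  have hD : 0 ≤ P.D κt κr M k := by
    apply Finset.sum_nonneg; intro m hm
    apply Finset.sum_nonneg; intro i _
    have hm' := Finset.mem_range.1 hm
    apply mul_nonneg (hγ i).1.le
    have h1 : 0 ≤ P.lam κt κr m k * P.β m i :=
      mul_nonneg (hlam m hm' k).le (hβ m hm' i).le
    have h2 : 0 ≤ (P.c κt κr m k) ^ 2 * (1 - κr) * P.ρp * (P.β m i) ^ 2 := by
      have := hκr1'; positivity
    have h3 : 0 ≤ (P.c κt κr m k) ^ 2 * κr * P.ρp * P.β m i *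
        ((P.τ:ℝ) * κt * P.δ k i + (1 - κt)) := by
      apply mul_nonneg
        (mul_nonneg (mul_nonneg (mul_nonneg (sq_nonneg _) hκr0.le) hρp.le) (hβ m hm' i).le)
      have := (hδ k i).1
      have : 0 ≤ (P.τ:ℝ) * κt * P.δ k i := by positivity
      linarith
    linarith
  have hE : 0 ≤ P.E κt κr ρu M k := by
    unfold Params.E
    exact mul_nonneg (div_nonneg hσ2.le hρu.le) hS.le
  have he : 0 ≤ (1 - κt) / (κt * (P.τ:ℝ)) := div_nonneg hκt1'.le (by positivity)
  -- key lower bound on C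
  have hsum_eq : (∑ m ∈ Finset.range M, P.lam κt κr m k * (P.β m k / P.β m k)) = S := by
    apply Finset.sum_congr rfl; intro m hm
    rw [div_self (hβ m (Finset.mem_range.1 hm) k).ne', mul_one]
  have hCk : P.γ k * (P.δ k k + (1 - κt) / (κt * (P.τ:ℝ))) *
      (∑ m ∈ Finset.range M, P.lam κt κr m k * (P.β m k / P.β m k)) ^ 2
      ≤ P.C κt κr M k := by
    apply Finset.single_le_sum (f := fun k' : Fin P.K =>
      P.γ k' * (P.δ k k' + (1 - κt) / (κt * (P.τ:ℝ))) *
        (∑ m ∈ Finset.range M, P.lam κt κr m k * (P.β m k' / P.β m k)) ^ 2)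
      _ (Finset.mem_univ k)
    intro i _
    have h1 : 0 ≤ P.δ k i + (1 - κt) / (κt * (P.τ:ℝ)) := by
      have := (hδ k i).1; linarith
    have := (hγ i).1.le
    positivity
  rw [hδd k, hsum_eq] at hCk
  have hC : (1 + (1 - κt) / (κt * (P.τ:ℝ))) * P.A κt κr M k ≤ P.C κt κr M k := by
    unfold Params.A
    calc (1 + (1 - κt) / (κt * (P.τ:ℝ))) * (P.γ k * S ^ 2)
        = P.γ k * (1 + (1 - κt) / (κt * (P.τ:ℝ))) * S ^ 2 := by ring
      _ ≤ P.C κt κr M k := hCk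
  set A := P.A κt κr M k
  set Den : ℝ := κr * P.B κt κr M k + κr * P.C κt κr M k - κr * κt * A +
      (1 - κr) * P.D κt κr M k + P.E κt κr ρu M k with hDen
  set Dlow : ℝ := κr * A * ((1 - κt) + (1 - κt) / (κt * (P.τ:ℝ))) with hDlow
  have hDlowpos : 0 < Dlow := by
    apply mul_pos (mul_pos hκr0 hA); positivity
  have hDenge : Dlow ≤ Den := by
    have h1 : κr * ((1 + (1 - κt) / (κt * (P.τ:ℝ))) * A) ≤ κr * P.C κt κr M k :=
      mul_le_mul_of_nonneg_left hC hκr0.le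
    have h2 : 0 ≤ κr * P.B κt κr M k := mul_nonneg hκr0.le hB
    have h3 : 0 ≤ (1 - κr) * P.D κt κr M k := mul_nonneg hκr1' hD
    rw [hDen, hDlow]; nlinarith
  have hDenpos : 0 < Den := lt_of_lt_of_le hDlowpos hDenge
  have hNum : 0 < κr * κt * A := by positivity
  have hSINR_eq : P.SINR κt κr ρu M k = κr * κt * A / Den := rfl
  have hXeq : κr * κt * A / Dlow = κt ^ 2 * (P.τ:ℝ) / ((1 - κt) * (κt * (P.τ:ℝ) + 1)) := by
    rw [hDlow]
    field_simp
  have hmain : P.SINR κt κr ρu M k ≤ κt ^ 2 * (P.τ:ℝ) / ((1 - κt) * (κt * (P.τ:ℝ) + 1)) := by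
    rw [hSINR_eq, ← hXeq]
    exact div_le_div_of_nonneg_left hNum.le hDlowpos hDenge
  have hsecond : κt ^ 2 * (P.τ:ℝ) / ((1 - κt) * (κt * (P.τ:ℝ) + 1)) ≤ κt / (1 - κt) := by
    rw [div_le_div_iff₀ (by positivity) hκt1']
    nlinarith
  refine ⟨hmain, hsecond, ?_⟩
  have hSINRnn : 0 ≤ P.SINR κt κr ρu M k := by
    rw [hSINR_eq]; exact div_nonneg hNum.le hDenpos.le
  have h1le : 1 + P.SINR κt κr ρu M k ≤ 1 / (1 - κt) := by
    have : 1 + κt / (1 - κt) = 1 / (1 - κt) := by field_simp; ring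
    linarith [le_trans hmain hsecond]
  unfold Params.R
  exact Real.logb_le_logb_of_le (by norm_num) (by linarith) h1le
end
end
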